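/- arXiv:2405.13782 — 5 statements merged into one kernel-verified Lean document; each statement's English description precedes it below -/
import Mathlib

section
/- Let (X,d) be a locally compact, locally connected metric space and E ⊆ X a connected set. Then for every ε > 0, any two points x, y ∈ E can be joined by a path γ in X whose image has diameter at most diam(E) + ε. -/
open Set Metric Filter Topology
open scoped ENNReal

namespace Stmt0

variable {X : Type*} [MetricSpace X]

/-- Generic "clopen transfer" principle on a preconnected set. -/
lemma transfer {C : Set X} (hC : IsPreconnected C) (P : X → Prop) (η : X → ℝ)
    (hη : ∀ z ∈ C, 0 < η z)
    (hloc : ∀ z ∈ C, ∀ w ∈ C, dist z w < η z → (P z ↔ P w))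
    {a b : X} (ha : a ∈ C) (hb : b ∈ C) (hPa : P a) : P b := by
  by_contra hPb
  set U : Set X := ⋃ (z : X) (_ : z ∈ C ∧ P z), ball z (η z) with hU
  set V : Set X := ⋃ (z : X) (_ : z ∈ C ∧ ¬ P z), ball z (η z) with hV
  have hUo : IsOpen U := isOpen_iUnion fun z => isOpen_iUnion fun _ => isOpen_ball
  have hVo : IsOpen V := isOpen_iUnion fun z => isOpen_iUnion fun _ => isOpen_ball
  have hcov : C ⊆ U ∪ V := by
    intro z hz
    by_cases hz' : P z
    · exact Or.inl (mem_iUnion₂.2 ⟨z, ⟨hz, hz'⟩, mem_ball_self (hη z hz)⟩)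
    · exact Or.inr (mem_iUnion₂.2 ⟨z, ⟨hz, hz'⟩, mem_ball_self (hη z hz)⟩)
  obtain ⟨w, hwC, hwU, hwV⟩ := hC U V hUo hVo hcov
    ⟨a, ha, mem_iUnion₂.2 ⟨a, ⟨ha, hPa⟩, mem_ball_self (hη a ha)⟩⟩
    ⟨b, hb, mem_iUnion₂.2 ⟨b, ⟨hb, hPb⟩, mem_ball_self (hη b hb)⟩⟩
  obtain ⟨z, ⟨hzC, hzP⟩, hwz⟩ := mem_iUnion₂.1 hwU
  obtain ⟨z', ⟨hz'C, hz'P⟩, hwz'⟩ := mem_iUnion₂.1 hwV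
  exact hz'P (((hloc z' hz'C w hwC (by rwa [dist_comm, ← mem_ball])).2)
    (((hloc z hzC w hwC (by rwa [dist_comm, ← mem_ball])).1) hzP))

/-- In a preconnected set, any two points are joined by an `η`-chain. -/
lemma chain_rtg {C : Set X} (hC : IsPreconnected C) {η : ℝ} (hη : 0 < η)
    {a b : X} (ha : a ∈ C) (hb : b ∈ C) :
    Relation.ReflTransGen (fun u v => v ∈ C ∧ dist u v < η) a b := by
  refine transfer hC (fun v => Relation.ReflTransGen (fun u v => v ∈ C ∧ dist u v < η) a v)
    (fun _ => η) (fun _ _ => hη) ?_ ha hb Relation.ReflTransGen.refl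
  intro z hz w hw hzw
  constructor
  · intro h; exact h.tail ⟨hw, hzw⟩
  · intro h; exact h.tail ⟨hz, by rwa [dist_comm]⟩

/-- Convert a chain to a list. -/
lemma chain_list {C : Set X} (hC : IsPreconnected C) {η : ℝ} (hη : 0 < η)
    {a b : X} (ha : a ∈ C) (hb : b ∈ C) :
    ∃ l : List X, List.Chain (fun u v => dist u v < η) a l ∧ (∀ z ∈ l, z ∈ C) ∧
      (a :: l).getLast (by simp) = b := by
  have h := chain_rtg hC hη ha hb
  induction h using Relation.ReflTransGen.head_induction_on with
  | refl => exact ⟨[], List.Chain.nil, by simp, rfl⟩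
  | head hac _ ih =>
    obtain ⟨l, hl1, hl2, hl3⟩ := ih hac.1
    refine ⟨_ :: l, List.Chain.cons hac.2 hl1, ?_, ?_⟩
    · intro z hz
      rcases List.mem_cons.1 hz with rfl | hz
      · exact hac.1
      · exact hl2 z hz
    · rw [List.getLast_cons (by simp)] ; exact hl3

/-- Uniform local connectedness near a compact set. -/
lemma unif_loc_conn [LocallyConnectedSpace X] {K : Set X} (hK : IsCompact K) {δ : ℝ}
    (hδ : 0 < δ) :
    ∃ η > 0, ∀ a ∈ K, ∀ b : X, dist a b < η →
      ∃ C : Set X, IsPreconnected C ∧ a ∈ C ∧ b ∈ C ∧ C ⊆ ball a δ := by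
  have hbasis := locallyConnectedSpace_iff_subsets_isOpen_isConnected.1 ‹_›
  choose V hVsub hVopen hVmem hVconn using
    fun z : X => hbasis z (ball z (δ/2)) (ball_mem_nhds z (by linarith))
  obtain ⟨η, hη, hcov⟩ := lebesgue_number_lemma_of_metric hK (c := fun z : X => V z)
    (fun z => hVopen z) (fun z _ => mem_iUnion.2 ⟨z, hVmem z⟩)
  refine ⟨η, hη, fun a haK b hab => ?_⟩
  obtain ⟨z, hz⟩ := hcov a haK
  have haV : a ∈ V z := hz (mem_ball_self hη)
  have hbV : b ∈ V z := hz (by rwa [mem_ball, dist_comm])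
  refine ⟨V z, (hVconn z).isPreconnected, haV, hbV, fun w hw => ?_⟩
  have h1 := hVsub z hw
  have h2 := hVsub z haV
  rw [mem_ball] at *
  calc dist w a ≤ dist w z + dist z a := dist_triangle _ _ _
    _ < δ/2 + δ/2 := by rw [dist_comm z a]; exact add_lt_add h1 h2
    _ = δ := by ring

set_option linter.unusedSectionVars false

/-- Value of a "step function" given by a list of (time, value) pairs, with default `z`. -/
noncomputable def evalFrom (z : X) (L : List (ℝ × X)) (t : ℝ) : X :=
  L.foldl (fun acc w => if w.1 ≤ t then w.2 else acc) z

@[simp] lemma evalFrom_nil (z : X) (t : ℝ) : evalFrom z [] t = z := rfl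

lemma evalFrom_cons (z : X) (u : ℝ × X) (L : List (ℝ × X)) (t : ℝ) :
    evalFrom z (u :: L) t = evalFrom (if u.1 ≤ t then u.2 else z) L t := rfl

lemma evalFrom_append (z : X) (L₁ L₂ : List (ℝ × X)) (t : ℝ) :
    evalFrom z (L₁ ++ L₂) t = evalFrom (evalFrom z L₁ t) L₂ t := List.foldl_append ..

lemma evalFrom_of_gt (z : X) {L : List (ℝ × X)} {t : ℝ} (h : ∀ w ∈ L, t < w.1) :
    evalFrom z L t = z := by
  induction L generalizing z with
  | nil => rfl
  | cons u L ih =>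
    rw [evalFrom_cons, if_neg (not_le.2 (h u (by simp)))]
    exact ih z fun w hw => h w (by simp [hw])

lemma evalFrom_mem (z : X) (L : List (ℝ × X)) (t : ℝ) :
    evalFrom z L t = z ∨ evalFrom z L t ∈ L.map Prod.snd := by
  induction L generalizing z with
  | nil => exact Or.inl rfl
  | cons u L ih =>
    rw [evalFrom_cons]
    by_cases h : u.1 ≤ t
    · rw [if_pos h]
      rcases ih u.2 with h' | h'
      · exact Or.inr (by simp [h'])
      · exact Or.inr (by simp [h'])
    · rw [if_neg h]
      rcases ih z with h' | h'
      · exact Or.inl h'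
      · exact Or.inr (by simp [h'])

lemma chain_snd_iff {S : X → X → Prop} {a : ℝ × X} {L : List (ℝ × X)} :
    List.Chain (fun u v : ℝ × X => S u.2 v.2) a L ↔ List.Chain S a.2 (L.map Prod.snd) :=
  (List.isChain_map (R := S) Prod.snd (l := a :: L)).symm

lemma pairwise_head {u : ℝ × X} {L : List (ℝ × X)}
    (h : List.Pairwise (fun a b : ℝ × X => a.1 < b.1) (u :: L)) :
    ∀ w ∈ L, u.1 < w.1 := (List.pairwise_cons.1 h).1

/-- key step estimate: the step function of an `η`-chain moves by at most `η` when
no time lies strictly between `s` and `t`. -/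
lemma evalFrom_step {η : ℝ} (hη : 0 ≤ η) :
    ∀ (L : List (ℝ × X)) (a : ℝ × X),
    List.Pairwise (fun u v : ℝ × X => u.1 < v.1) (a :: L) →
    List.Chain (fun u v : ℝ × X => dist u.2 v.2 < η) a L →
    ∀ s t : ℝ, s ≤ t → (∀ w ∈ L, w.1 ≤ s ∨ t ≤ w.1) →
    dist (evalFrom a.2 L s) (evalFrom a.2 L t) ≤ η := by
  intro L
  induction L with
  | nil => intro a _ _ s t _ _; simp [hη]
  | cons u L ih =>
    intro a hpair hchain s t hst hgap
    rw [List.Chain, List.isChain_cons_cons] at hchain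
    by_cases hus : u.1 ≤ s
    · rw [evalFrom_cons, if_pos hus, evalFrom_cons, if_pos (hus.trans hst)]
      exact ih u hpair.of_cons hchain.2 s t hst fun w hw => hgap w (by simp [hw])
    · have hLgt : ∀ w ∈ L, u.1 < w.1 := fun w hw => pairwise_head hpair.of_cons w hw
      have hs : s < u.1 := not_le.1 hus
      rw [evalFrom_cons, if_neg hus, evalFrom_cons]
      have htu : t ≤ u.1 := (hgap u (by simp)).resolve_left hus
      by_cases hut : u.1 ≤ t
      · rw [if_pos hut]
        rw [evalFrom_of_gt a.2 (fun w hw => hs.trans (hLgt w hw)),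
            evalFrom_of_gt u.2 (fun w hw => htu.trans_lt (hLgt w hw))]
        exact le_of_lt hchain.1
      · rw [if_neg hut]
        have ht : t < u.1 := not_le.1 hut
        rw [evalFrom_of_gt a.2 (fun w hw => hs.trans (hLgt w hw)),
            evalFrom_of_gt a.2 (fun w hw => ht.trans (hLgt w hw))]
        simp [hη]



/-- Assign strictly increasing times in `(t, t')` to a list of points. -/
noncomputable def assign (t t' : ℝ) : List X → List (ℝ × X)
  | [] => []
  | z :: zs => ((t + t') / 2, z) :: assign ((t + t') / 2) t' zs

@[simp] lemma assign_map_snd (t t' : ℝ) (zs : List X) :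
    (assign t t' zs).map Prod.snd = zs := by
  induction zs generalizing t with
  | nil => rfl
  | cons z zs ih => simp [assign, ih]

lemma assign_mem_Ioo {t t' : ℝ} (h : t < t') (zs : List X) :
    ∀ w ∈ assign t t' zs, t < w.1 ∧ w.1 < t' := by
  induction zs generalizing t with
  | nil => simp [assign]
  | cons z zs ih =>
    intro w hw
    have h1 : t < (t + t') / 2 := by linarith
    have h2 : (t + t') / 2 < t' := by linarith
    rcases List.mem_cons.1 hw with rfl | hw
    · exact ⟨h1, h2⟩
    · exact ⟨h1.trans (ih h2 w hw).1, (ih h2 w hw).2⟩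

lemma assign_pairwise {t t' : ℝ} (h : t < t') (zs : List X) :
    List.Pairwise (fun u v : ℝ × X => u.1 < v.1) (assign t t' zs) := by
  induction zs generalizing t with
  | nil => simp [assign]
  | cons z zs ih =>
    have h2 : (t + t') / 2 < t' := by linarith
    exact List.pairwise_cons.2 ⟨fun w hw => (assign_mem_Ioo h2 zs w hw).1, ih h2⟩


/-- The refinement step: an `η n`-fine marked partition can be refined to an `η (n+1)`-fine one
moving the step function by at most `r / 2^(n+1)`. -/
lemma refine [LocallyConnectedSpace X] (p : X) (r : ℝ) (hr : 0 < r) (η : ℕ → ℝ)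
    (hη0 : ∀ n, 0 < η n)
    (hηA : ∀ n, ∀ a ∈ closedBall p (2*r), ∀ b : X, dist a b < η n →
      ∃ C : Set X, IsPreconnected C ∧ a ∈ C ∧ b ∈ C ∧ C ⊆ ball a (r / 2^(n+1)))
    (n : ℕ) (L : List (ℝ × X))
    (hpair : List.Pairwise (fun u v : ℝ × X => u.1 < v.1) L)
    (hchain : List.Chain' (fun u v : ℝ × X => dist u.2 v.2 < η n) L)
    (hmem : ∀ w ∈ L, w.2 ∈ closedBall p (3*r/2 - r/2^n)) :
    ∃ L' : List (ℝ × X), L'.head? = L.head? ∧ L'.getLast? = L.getLast? ∧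
      List.Pairwise (fun u v : ℝ × X => u.1 < v.1) L' ∧
      List.Chain' (fun u v : ℝ × X => dist u.2 v.2 < η (n+1)) L' ∧
      (∀ w ∈ L', w.2 ∈ closedBall p (3*r/2 - r/2^(n+1))) ∧
      (∀ (z : X) (t : ℝ), dist (evalFrom z L t) (evalFrom z L' t) ≤ r / 2^(n+1)) := by
  have hδ : (0:ℝ) < r / 2^(n+1) := by positivity
  have hRmono : 3*r/2 - r/2^n ≤ 3*r/2 - r/2^(n+1) := by
    have : r/2^(n+1) ≤ r/2^n := by
      apply div_le_div_of_nonneg_left hr.le (by positivity)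
      exact pow_le_pow_right₀ (by norm_num) (Nat.le_succ n)
    linarith
  have hRrec : 3*r/2 - r/2^n + r/2^(n+1) = 3*r/2 - r/2^(n+1) := by
    have h2 : (2:ℝ)^(n+1) = 2 * 2^n := by ring
    field_simp [h2]; ring
  have hR2r : 3*r/2 - r/2^n ≤ 2*r := by
    have : (0:ℝ) < r/2^n := by positivity
    linarith
  induction L with
  | nil => exact ⟨[], rfl, rfl, .nil, List.isChain_nil, by simp, fun z t => by simp [hδ.le]⟩
  | cons a L ihL =>
    cases L with
    | nil =>
      refine ⟨[a], rfl, rfl, hpair, List.isChain_singleton a, ?_, fun z t => by simp [hδ.le]⟩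
      intro w hw
      rcases List.mem_singleton.1 hw with rfl
      exact closedBall_subset_closedBall hRmono (hmem w (by simp))
    | cons b rest =>
      have hpair' : List.Pairwise (fun u v : ℝ × X => u.1 < v.1) (b :: rest) := hpair.of_cons
      have hab : a.1 < b.1 := (List.pairwise_cons.1 hpair).1 b (by simp)
      have hrest : ∀ w ∈ rest, b.1 < w.1 := pairwise_head hpair'
      rw [List.Chain', List.isChain_cons_cons] at hchain
      obtain ⟨M', hhead, hlast, hMp, hMc, hMm, hMe⟩ :=
        ihL hpair' hchain.2 (fun w hw => hmem w (by simp [hw]))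
      obtain ⟨M, rfl⟩ : ∃ M, M' = b :: M := by
        cases M' with
        | nil => simp at hhead
        | cons b' M =>
          simp only [List.head?_cons, Option.some.injEq] at hhead
          exact ⟨M, by rw [hhead]⟩
      have haK : a.2 ∈ closedBall p (2*r) :=
        closedBall_subset_closedBall hR2r (hmem a (by simp))
      obtain ⟨C, hCp, haC, hbC, hCsub⟩ := hηA n a.2 haK b.2 hchain.1
      obtain ⟨l, hl1, hl2, hl3⟩ := chain_list hCp (hη0 (n+1)) haC hbC
      have hchain2 : List.Chain (fun u v : X => dist u v < η (n+1)) a.2 (l.dropLast ++ [b.2]) := by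
        rcases eq_or_ne l [] with rfl | hne
        · have hab2 : a.2 = b.2 := by simpa using hl3
          simpa [← hab2, List.Chain, List.isChain_pair] using hη0 (n+1)
        · have hgl : l.getLast hne = b.2 := by
            rw [← hl3, List.getLast_cons hne]
          rw [← hgl, List.dropLast_append_getLast hne]
          exact hl1
      have hzsC : ∀ z ∈ l.dropLast, z ∈ C := fun z hz => hl2 z (List.dropLast_subset l hz)
      set zs := l.dropLast with hzs
      set block := assign a.1 b.1 zs with hblockdef
      have hblocksnd : block.map Prod.snd = zs := assign_map_snd _ _ _
      have hblockIoo : ∀ w ∈ block, a.1 < w.1 ∧ w.1 < b.1 := assign_mem_Ioo hab zs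
      have hMge : ∀ w ∈ b :: M, b.1 ≤ w.1 := by
        intro w hw
        rcases List.mem_cons.1 hw with rfl | hw
        · exact le_refl _
        · exact (pairwise_head hMp w hw).le
      have hblockC : ∀ w ∈ block, w.2 ∈ C := by
        intro w hw
        exact hzsC w.2 (hblocksnd ▸ List.mem_map_of_mem (f := Prod.snd) hw)
      refine ⟨a :: (block ++ b :: M), rfl, ?_, ?_, ?_, ?_, ?_⟩
      · -- getLast?
        show ((a :: block) ++ (b :: M)).getLast? = (a :: b :: rest).getLast?
        rw [List.getLast?_append, hlast, List.getLast?_cons_cons]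
        cases h : (b :: rest).getLast? with
        | none => simp at h
        | some w => simp
      · -- pairwise
        refine List.pairwise_cons.2 ⟨?_, List.pairwise_append.2 ⟨assign_pairwise hab zs, hMp, ?_⟩⟩
        · intro w hw
          rcases List.mem_append.1 hw with hw | hw
          · exact (hblockIoo w hw).1
          · exact hab.trans_le (hMge w hw)
        · exact fun u hu v hv => (hblockIoo u hu).2.trans_le (hMge v hv)
      · -- chain
        show List.Chain (fun u v : ℝ × X => dist u.2 v.2 < η (n+1)) a (block ++ b :: M)
        have hMc' : List.Chain (fun u v : ℝ × X => dist u.2 v.2 < η (n+1)) b M := hMc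
        refine (chain_snd_iff (S := fun x y : X => dist x y < η (n+1))).2 ?_
        rw [List.map_append, hblocksnd, List.map_cons]
        exact List.isChain_cons_split.2 ⟨hchain2,
          (chain_snd_iff (S := fun x y : X => dist x y < η (n+1))).1 hMc'⟩
      · -- membership
        intro w hw
        rcases List.mem_cons.1 hw with rfl | hw
        · exact closedBall_subset_closedBall hRmono (hmem w (by simp))
        rcases List.mem_append.1 hw with hw | hw
        · have hwC : w.2 ∈ ball a.2 (r/2^(n+1)) := hCsub (hblockC w hw)
          have h1 : dist a.2 p ≤ 3*r/2 - r/2^n := mem_closedBall.1 (hmem a (by simp))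
          have h2 : dist w.2 a.2 < r/2^(n+1) := mem_ball.1 hwC
          rw [mem_closedBall]
          calc dist w.2 p ≤ dist w.2 a.2 + dist a.2 p := dist_triangle _ _ _
            _ ≤ r/2^(n+1) + (3*r/2 - r/2^n) := add_le_add h2.le h1
            _ = 3*r/2 - r/2^(n+1) := by rw [add_comm]; exact hRrec
        · exact hMm w hw
      · -- eval estimate
        intro z t
        by_cases ht1 : t < a.1
        · rw [evalFrom_of_gt z (L := a :: b :: rest) ?_, evalFrom_of_gt z ?_]
          · simp [hδ.le]
          · intro w hw
            rcases List.mem_cons.1 hw with rfl | hw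
            · exact ht1
            rcases List.mem_append.1 hw with hw | hw
            · exact ht1.trans (hblockIoo w hw).1
            · exact ht1.trans (hab.trans_le (hMge w hw))
          · intro w hw
            rcases List.mem_cons.1 hw with rfl | hw
            · exact ht1
            rcases List.mem_cons.1 hw with rfl | hw
            · exact ht1.trans hab
            · exact ht1.trans (hab.trans (hrest w hw))
        · push_neg at ht1
          by_cases ht2 : t < b.1
          · have hL : evalFrom z (a :: b :: rest) t = a.2 := by
              rw [evalFrom_cons, if_pos ht1]
              apply evalFrom_of_gt
              intro w hw
              rcases List.mem_cons.1 hw with rfl | hw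
              · exact ht2
              · exact ht2.trans (hrest w hw)
            have hRhs : evalFrom z (a :: (block ++ b :: M)) t = evalFrom a.2 block t := by
              rw [evalFrom_cons, if_pos ht1, evalFrom_append]
              exact evalFrom_of_gt _ fun w hw => ht2.trans_le (hMge w hw)
            rw [hL, hRhs]
            rcases evalFrom_mem a.2 block t with h | h
            · rw [h]; simp [hδ.le]
            · rw [hblocksnd] at h
              have hballm := mem_ball.1 (hCsub (hzsC _ h))
              rw [dist_comm]
              exact hballm.le
          · push_neg at ht2
            have key : ∀ w : X, evalFrom w (b :: M) t = evalFrom b.2 M t := fun w => by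
              rw [evalFrom_cons, if_pos ht2]
            have key2 : ∀ w : X, evalFrom w (b :: rest) t = evalFrom b.2 rest t := fun w => by
              rw [evalFrom_cons, if_pos ht2]
            have hL : evalFrom z (a :: b :: rest) t = evalFrom z (b :: rest) t := by
              rw [evalFrom_cons, key2, key2]
            have hR' : evalFrom z (a :: (block ++ b :: M)) t = evalFrom z (b :: M) t := by
              show evalFrom z ((a :: block) ++ (b :: M)) t = _
              rw [evalFrom_append, key, key]
            rw [hL, hR']
            exact hMe z t


/-- **Local path connectivity**: in a locally compact locally connected metric space, points
sufficiently close to `p` can be joined to `p` by a path staying in `closedBall p ε`. -/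
lemma loc_path [LocallyCompactSpace X] [LocallyConnectedSpace X] (p : X) {ε : ℝ} (hε : 0 < ε) :
    ∃ η > 0, ∀ q : X, dist p q < η → ∃ γ : Path p q, ∀ t, γ t ∈ closedBall p ε := by
  -- choose a compact ball
  obtain ⟨K₀, hK₀c, hK₀n⟩ := exists_compact_mem_nhds p
  obtain ⟨r₀, hr₀, hball⟩ := Metric.mem_nhds_iff.1 hK₀n
  set r : ℝ := min (r₀ / 4) (ε / 2) with hrdef
  have hr : 0 < r := lt_min (by linarith) (by linarith)
  have h2rε : 2 * r ≤ ε := by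
    have := min_le_right (r₀/4) (ε/2); simp only [← hrdef] at this; linarith
  have hcomp : IsCompact (closedBall p (2 * r)) := by
    refine hK₀c.of_isClosed_subset isClosed_closedBall ?_
    refine subset_trans (closedBall_subset_ball ?_) hball
    have := min_le_left (r₀/4) (ε/2); simp only [← hrdef] at this; linarith
  -- the scales
  have hηex : ∀ n : ℕ, ∃ ηn > 0, ηn ≤ r / 2^(n+1) ∧ ∀ a ∈ closedBall p (2*r), ∀ b : X,
      dist a b < ηn → ∃ C : Set X, IsPreconnected C ∧ a ∈ C ∧ b ∈ C ∧ C ⊆ ball a (r / 2^(n+1)) := by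
    intro n
    obtain ⟨ηA, hηA, hA⟩ := unif_loc_conn hcomp (δ := r / 2^(n+1)) (by positivity)
    refine ⟨min ηA (r / 2^(n+1)), lt_min hηA (by positivity), min_le_right _ _, ?_⟩
    intro a ha b hab
    exact hA a ha b (hab.trans_le (min_le_left _ _))
  choose η hη0 hηδ hηA using hηex
  refine ⟨η 0, hη0 0, fun q hpq => ?_⟩
  -- the invariant
  set Good : ℕ → List (ℝ × X) → Prop := fun n L =>
    L.head? = some (0, p) ∧ L.getLast? = some (1, q) ∧
    List.Pairwise (fun u v : ℝ × X => u.1 < v.1) L ∧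
    List.Chain' (fun u v : ℝ × X => dist u.2 v.2 < η n) L ∧
    (∀ w ∈ L, w.2 ∈ closedBall p (3*r/2 - r/2^n)) with hGood
  have good0 : Good 0 [(0, p), (1, q)] := by
    refine ⟨rfl, rfl, ?_, ?_, ?_⟩
    · simp
    · simpa [List.Chain', List.isChain_pair] using hpq
    · intro w hw
      rcases List.mem_cons.1 hw with rfl | hw
      · simp only [mem_closedBall, dist_self]
        norm_num
        linarith
      · rcases List.mem_singleton.1 hw with rfl
        simp only [mem_closedBall]
        have h1 : dist q p < r / 2^(0+1) := by rw [dist_comm]; exact hpq.trans_le (hηδ 0)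
        norm_num at h1 ⊢
        linarith
  have step : ∀ n (L : List (ℝ × X)), Good n L → ∃ L', Good (n+1) L' ∧
      ∀ (z : X) (t : ℝ), dist (evalFrom z L t) (evalFrom z L' t) ≤ r / 2^(n+1) := by
    intro n L hL
    obtain ⟨L', h1, h2, h3, h4, h5, h6⟩ := refine p r hr η hη0 hηA n L hL.2.2.1 hL.2.2.2.1 hL.2.2.2.2
    exact ⟨L', ⟨h1.trans hL.1, h2.trans hL.2.1, h3, h4, h5⟩, h6⟩
  let S : ∀ n : ℕ, {L : List (ℝ × X) // Good n L} := fun n =>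
    Nat.rec ⟨[(0, p), (1, q)], good0⟩
      (fun n S => ⟨Classical.choose (step n S.1 S.2),
        (Classical.choose_spec (step n S.1 S.2)).1⟩) n
  have hSlink : ∀ n (z : X) (t : ℝ),
      dist (evalFrom z (S n).1 t) (evalFrom z (S (n+1)).1 t) ≤ r / 2^(n+1) :=
    fun n => (Classical.choose_spec (step n (S n).1 (S n).2)).2
  set f : ℕ → ℝ → X := fun n t => evalFrom p (S n).1 t with hf
  have hgeom : ∀ n : ℕ, r / 2^(n+1) = (r/2) * (1/2 : ℝ)^n := by
    intro n
    rw [div_pow, one_pow, pow_succ, div_mul_eq_mul_div, mul_one_div, div_div]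
  have hlink : ∀ (t : ℝ) n, dist (f n t) ((f (n+1)) t) ≤ (r/2) * (1/2 : ℝ)^n := by
    intro t n
    rw [← hgeom]
    exact hSlink n p t
  have hcauchy : ∀ t : ℝ, CauchySeq (fun n => f n t) :=
    fun t => cauchySeq_of_le_geometric (1/2) (r/2) (by norm_num) (hlink t)
  have hfK : ∀ n t, f n t ∈ closedBall p (2*r) := by
    intro n t
    rcases evalFrom_mem p (S n).1 t with h | h
    · rw [hf]; simp only; rw [h]; simp only [mem_closedBall, dist_self]; positivity
    · obtain ⟨w, hw, hw2⟩ := List.mem_map.1 h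
      have := (S n).2.2.2.2.2 w hw
      rw [hf]; simp only; rw [← hw2]
      refine closedBall_subset_closedBall ?_ this
      have : (0:ℝ) < r/2^n := by positivity
      linarith
  choose g hg using fun t : ℝ =>
    cauchySeq_tendsto_of_isComplete hcomp.isComplete (fun n => hfK n t) (hcauchy t)
  have hdist : ∀ n t, dist (f n t) (g t) ≤ r * (1/2 : ℝ)^n := by
    intro n t
    have := dist_le_of_le_geometric_of_tendsto (1/2) (r/2) (by norm_num) (hlink t) (hg t).2 n
    calc dist (f n t) (g t) ≤ (r/2) * (1/2:ℝ)^n / (1 - 1/2) := this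
      _ = r * (1/2:ℝ)^n := by ring
  have hstruct : ∀ n, ∃ tail, (S n).1 = ((0:ℝ), p) :: tail := by
    intro n
    have h := (S n).2.1
    cases hL : (S n).1 with
    | nil => rw [hL] at h; simp at h
    | cons a tail =>
      rw [hL] at h
      simp only [List.head?_cons, Option.some.injEq] at h
      exact ⟨tail, by rw [h]⟩
  have hfred : ∀ n (s : ℝ) tail, (S n).1 = ((0:ℝ), p) :: tail → f n s = evalFrom p tail s := by
    intro n s tail htail
    show evalFrom p (S n).1 s = _
    rw [htail, evalFrom_cons]
    congr 1
    split <;> rfl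
  have hf0 : ∀ n, f n 0 = p := by
    intro n
    obtain ⟨tail, htail⟩ := hstruct n
    rw [hfred n 0 tail htail]
    apply evalFrom_of_gt
    have hp := (S n).2.2.2.1
    rw [htail] at hp
    exact pairwise_head hp
  have hf1 : ∀ n, f n 1 = q := by
    intro n
    have h := (S n).2.2.1
    have hsplit : (S n).1.dropLast ++ [((1:ℝ), q)] = (S n).1 :=
      List.dropLast_append_getLast? _ h
    show evalFrom p (S n).1 1 = q
    rw [← hsplit, evalFrom_append, evalFrom_cons]
    norm_num
  have hg0 : g 0 = p := by
    have h2 := (hg 0).2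
    have he : (fun n => f n 0) = fun _ => p := funext hf0
    rw [he] at h2
    exact tendsto_nhds_unique h2 tendsto_const_nhds
  have hg1 : g 1 = q := by
    have h2 := (hg 1).2
    have he : (fun n => f n 1) = fun _ => q := funext hf1
    rw [he] at h2
    exact tendsto_nhds_unique h2 tendsto_const_nhds
  have hgcont : Continuous g := by
    rw [Metric.continuous_iff]
    intro t ε' hε'
    obtain ⟨m, hm⟩ := exists_pow_lt_of_lt_one (show (0:ℝ) < ε'/(3*r) by positivity)
      (show (1:ℝ)/2 < 1 by norm_num)
    have hn : 3 * (r * (1/2:ℝ)^m) < ε' := by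
      have h3 := (lt_div_iff₀ (by positivity : (0:ℝ) < 3*r)).1 hm
      nlinarith
    obtain ⟨tail, htail⟩ := hstruct m
    have hpairm := (S m).2.2.2.1
    have hchainm : List.Chain (fun u v : ℝ × X => dist u.2 v.2 < η m) ((0:ℝ), p) tail := by
      have hc := (S m).2.2.2.2.1
      rw [htail] at hc
      exact hc
    rw [htail] at hpairm
    classical
    obtain ⟨θ, hθ0, hθ⟩ : ∃ θ > 0, ∀ u ∈ tail.map Prod.fst, u ≠ t → θ ≤ |u - t| := by
      by_cases hne : ((tail.map Prod.fst).toFinset.filter (fun u => u ≠ t)).Nonempty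
      · refine ⟨((tail.map Prod.fst).toFinset.filter (fun u => u ≠ t)).inf' hne
          (fun u => |u - t|), ?_, ?_⟩
        · refine (Finset.lt_inf'_iff hne).2 fun u hu => ?_
          exact abs_pos.2 (sub_ne_zero.2 (Finset.mem_filter.1 hu).2)
        · intro u hu hut
          exact Finset.inf'_le _ (Finset.mem_filter.2 ⟨List.mem_toFinset.2 hu, hut⟩)
      · exact ⟨1, one_pos, fun u hu hut =>
          absurd ⟨u, Finset.mem_filter.2 ⟨List.mem_toFinset.2 hu, hut⟩⟩ hne⟩
    refine ⟨θ, hθ0, fun s hst => ?_⟩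
    rw [Real.dist_eq] at hst
    have hstep : dist (evalFrom p tail (min s t)) (evalFrom p tail (max s t)) ≤ η m := by
      apply evalFrom_step (hη0 m).le tail ((0:ℝ), p) hpairm hchainm _ _ min_le_max
      intro w hw
      rcases eq_or_ne w.1 t with hwt | hwt
      · rcases le_total s t with h | h
        · right; rw [max_eq_right h, hwt]
        · left; rw [min_eq_right h, hwt]
      · have hθu := hθ w.1 (List.mem_map_of_mem (f := Prod.fst) hw) hwt
        have habs := abs_sub_lt_iff.1 (hst.trans_le hθu)
        rcases lt_or_gt_of_ne (sub_ne_zero.2 hwt) with h | h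
        · left
          rw [abs_of_neg h] at habs
          refine le_min (by linarith [habs.2]) (by linarith)
        · right
          rw [abs_of_pos h] at habs
          refine max_le (by linarith [habs.1]) (by linarith)
    have hkey : dist (f m s) (f m t) ≤ η m := by
      rw [hfred m s tail htail, hfred m t tail htail]
      rcases le_total s t with h | h
      · rw [min_eq_left h, max_eq_right h] at hstep
        exact hstep
      · rw [min_eq_right h, max_eq_left h] at hstep
        rw [dist_comm]
        exact hstep
    have hηm : η m ≤ r * (1/2:ℝ)^m := by
      have h1 := hηδ m
      rw [hgeom m] at h1
      have h2 : (0:ℝ) < (1/2:ℝ)^m := by positivity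
      nlinarith
    calc dist (g s) (g t)
        ≤ dist (g s) (f m s) + dist (f m s) (f m t) + dist (f m t) (g t) :=
          dist_triangle4 _ _ _ _
      _ ≤ r * (1/2:ℝ)^m + η m + r * (1/2:ℝ)^m := by
          refine add_le_add (add_le_add ?_ hkey) (hdist m t)
          rw [dist_comm]
          exact hdist m s
      _ ≤ 3 * (r * (1/2:ℝ)^m) := by linarith
      _ < ε' := hn
  refine ⟨⟨⟨fun t : unitInterval => g t, hgcont.comp continuous_subtype_val⟩, ?_, ?_⟩, ?_⟩
  · show g ((0 : unitInterval) : ℝ) = p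
    rw [Set.Icc.coe_zero, hg0]
  · show g ((1 : unitInterval) : ℝ) = q
    rw [Set.Icc.coe_one, hg1]
  · intro t
    exact closedBall_subset_closedBall h2rε ((hg t).1)

end Stmt0

open Stmt0 in
/-- In a locally compact, locally connected metric space, any two points of a
connected set `E` can be joined by a path whose image has diameter at most `diam E + ε`. -/
theorem statement_0 {X : Type*} [MetricSpace X] [LocallyCompactSpace X] [LocallyConnectedSpace X]
    (E : Set X) (hE : IsConnected E) {x y : X} (hx : x ∈ E) (hy : y ∈ E)
    {ε : ℝ} (hε : 0 < ε) :
    ∃ γ : Path x y, EMetric.diam (Set.range fun t => γ t) ≤ EMetric.diam E + ENNReal.ofReal ε := by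
  have hε2 : (0:ℝ) < ε/2 := by linarith
  choose ηP hηP hP using fun z : X => loc_path z hε2
  set P : X → Prop := fun z =>
    ∃ γ : Path x z, (Set.range fun t => γ t) ⊆ cthickening (ε/2) E with hPdef
  have key : ∀ z ∈ E, ∀ w ∈ E, dist z w < ηP z → (P z ↔ P w) := by
    intro z hz w hw hzw
    obtain ⟨σ, hσ⟩ := hP z w hzw
    have hσsub : Set.range (fun t => σ t) ⊆ cthickening (ε/2) E := by
      rintro _ ⟨t, rfl⟩
      exact mem_cthickening_of_dist_le (σ t) z (ε/2) E hz (mem_closedBall.1 (hσ t))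
    constructor
    · rintro ⟨γ, hγ⟩
      refine ⟨γ.trans σ, ?_⟩
      have := Path.trans_range γ σ
      show Set.range (γ.trans σ) ⊆ _
      rw [this]
      exact union_subset hγ hσsub
    · rintro ⟨γ, hγ⟩
      refine ⟨γ.trans σ.symm, ?_⟩
      have := Path.trans_range γ σ.symm
      show Set.range (γ.trans σ.symm) ⊆ _
      rw [this, Path.symm_range]
      exact union_subset hγ hσsub
  have hPx : P x := by
    refine ⟨Path.refl x, ?_⟩
    show Set.range (Path.refl x) ⊆ _
    rw [Path.refl_range]
    exact (singleton_subset_iff).2 (self_subset_cthickening E hx)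
  obtain ⟨γ, hγ⟩ := transfer hE.2 P ηP (fun z _ => hηP z) key hx hy hPx
  refine ⟨γ, ?_⟩
  calc EMetric.diam (Set.range fun t => γ t)
      ≤ EMetric.diam (cthickening (ε/2) E) := EMetric.diam_mono hγ
    _ ≤ EMetric.diam E + 2 * ENNReal.ofReal (ε/2) := by
        have h := Metric.ediam_cthickening_le (s := E) ((ε/2).toNNReal)
        rw [Real.coe_toNNReal _ hε2.le] at h
        exact h
    _ = EMetric.diam E + ENNReal.ofReal ε := by
        rw [two_mul, ← ENNReal.ofReal_add hε2.le hε2.le]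
        norm_num
end

section
/- Let (X,d) be a locally compact metric space with L-bounded turning for some L ≥ 1. Then for every L' > L, any two points x, y ∈ X can be joined by a path γ in X with diam(γ([0,1])) ≤ L' · d(x,y). -/
open Set Metric Filter Topology
open scoped ENNReal

namespace BTProof

variable {X : Type*} [MetricSpace X]

lemma dist_le_of_mem_diam {E : Set X} {p q : X} {r : ℝ} (hr : 0 ≤ r)
    (hE : EMetric.diam E ≤ ENNReal.ofReal r) (hp : p ∈ E) (hq : q ∈ E) :
    dist p q ≤ r := by
  have h := (EMetric.edist_le_diam_of_mem hp hq).trans hE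
  rw [edist_dist] at h
  exact (ENNReal.ofReal_le_ofReal_iff hr).mp h

lemma chain_lemma {E : Set X} (hconn : IsPreconnected E) {a b : X} (ha : a ∈ E) (hb : b ∈ E)
    {δ : ℝ} (hδ : 0 < δ) :
    ∃ (N : ℕ) (c : ℕ → X), c 0 = a ∧ (∀ j, N ≤ j → c j = b) ∧ (∀ j, c j ∈ E) ∧
      ∀ j, dist (c j) (c (j+1)) ≤ δ := by
  set S : Set X := {w | w ∈ E ∧ ∃ (N : ℕ) (c : ℕ → X), c 0 = a ∧ c N = w ∧ (∀ j, c j ∈ E) ∧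
      ∀ j, j < N → dist (c j) (c (j+1)) ≤ δ} with hSdef
  have haS : a ∈ S := ⟨ha, 0, fun _ => a, rfl, rfl, fun _ => ha, fun j hj => by omega⟩
  have hext : ∀ w ∈ S, ∀ z ∈ E, dist w z ≤ δ → z ∈ S := by
    rintro w ⟨hwE, N, c, hc0, hcN, hcE, hgap⟩ z hzE hd
    refine ⟨hzE, N+1, fun j => if j ≤ N then c j else z, by simp [hc0], by simp, ?_, ?_⟩
    · intro j
      by_cases hj : j ≤ N <;> simp [hj, hcE, hzE]
    · intro j hj
      rcases Nat.lt_or_ge j N with h | h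
      · have h1 : j ≤ N := h.le
        have h2 : j + 1 ≤ N := h
        simp only [h1, h2, if_true]
        exact hgap j h
      · have hjN : j = N := by omega
        subst hjN
        show dist (if j ≤ j then c j else z) (if j + 1 ≤ j then c (j+1) else z) ≤ δ
        rw [if_pos (le_refl j), if_neg (by omega), hcN]
        exact hd
  have hbS : b ∈ S := by
    by_contra hbS
    set V : Set X := ⋃ w ∈ S, ball w δ with hV
    set W : Set X := ⋃ w ∈ E \ S, ball w δ with hW
    have hVo : IsOpen V := isOpen_biUnion fun _ _ => isOpen_ball
    have hWo : IsOpen W := isOpen_biUnion fun _ _ => isOpen_ball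
    have hcover : E ⊆ V ∪ W := by
      intro w hw
      by_cases hwS : w ∈ S
      · exact Or.inl (mem_biUnion hwS (mem_ball_self hδ))
      · exact Or.inr (mem_biUnion ⟨hw, hwS⟩ (mem_ball_self hδ))
    have hVne : (E ∩ V).Nonempty := ⟨a, ha, mem_biUnion haS (mem_ball_self hδ)⟩
    have hWne : (E ∩ W).Nonempty := ⟨b, hb, mem_biUnion ⟨hb, hbS⟩ (mem_ball_self hδ)⟩
    obtain ⟨z, hzE, hzV, hzW⟩ := hconn V W hVo hWo hcover hVne hWne
    obtain ⟨w, hwS, hzw⟩ := mem_iUnion₂.mp hzV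
    obtain ⟨w', hw'ES, hzw'⟩ := mem_iUnion₂.mp hzW
    have hzS : z ∈ S := hext w hwS z hzE (by rw [dist_comm]; exact (mem_ball.mp hzw).le)
    have : w' ∈ S := hext z hzS w' hw'ES.1 (by have := (mem_ball.mp hzw').le; rw [dist_comm] at this ⊢; exact this)
    exact hw'ES.2 this
  obtain ⟨hbE, N, c, hc0, hcN, hcE, hgap⟩ := hbS
  refine ⟨N, fun j => c (min j N), by simp [hc0], ?_, fun j => hcE _, ?_⟩
  · intro j hj
    show c (min j N) = b
    rw [min_eq_right hj, hcN]
  · intro j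
    show dist (c (min j N)) (c (min (j+1) N)) ≤ δ
    rcases Nat.lt_or_ge j N with h | h
    · rw [min_eq_left h.le, min_eq_left h]
      exact hgap j h
    · rw [min_eq_right h, min_eq_right (by omega)]
      simp [hδ.le]

structure Lvl (X : Type*) [MetricSpace X] (u v : X) where
  M : ℕ
  g : ℕ → X
  δ : ℝ
  hM : 0 < M
  h0 : g 0 = u
  htop : ∀ i, M ≤ i → g i = v
  hgap : ∀ i, dist (g i) (g (i+1)) ≤ δ
  hδ : 0 < δ

variable {L : ℝ}

lemma step_ex (hL : 1 ≤ L)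
    (hbt : ∀ a b : X, ∃ E : Set X, a ∈ E ∧ b ∈ E ∧ IsConnected E ∧
      EMetric.diam E ≤ ENNReal.ofReal (L * dist a b))
    (u v : X) (A : Lvl X u v) :
    ∃ B : Lvl X u v, B.δ = A.δ / 2 ∧ ∃ K : ℕ, 0 < K ∧ B.M = A.M * K ∧
      ∀ q : ℕ, dist (B.g q) (A.g (q / K)) ≤ L * A.δ := by
  have hL0 : (0:ℝ) ≤ L := by linarith
  have hδ2 : 0 < A.δ / 2 := by have := A.hδ; linarith
  have H : ∀ i : ℕ, ∃ (N : ℕ) (c : ℕ → X), c 0 = A.g i ∧ (∀ j, N ≤ j → c j = A.g (i+1)) ∧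
      (∀ j, dist (c j) (A.g i) ≤ L * A.δ) ∧ ∀ j, dist (c j) (c (j+1)) ≤ A.δ / 2 := by
    intro i
    obtain ⟨E, haE, hbE, hEc, hEd⟩ := hbt (A.g i) (A.g (i+1))
    obtain ⟨N, c, h0, hN, hmem, hgap⟩ := chain_lemma hEc.isPreconnected haE hbE hδ2
    refine ⟨N, c, h0, hN, fun j => ?_, hgap⟩
    have h1 : dist (c j) (A.g i) ≤ L * dist (A.g i) (A.g (i+1)) :=
      dist_le_of_mem_diam (mul_nonneg hL0 dist_nonneg) hEd (hmem j) haE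
    exact h1.trans (mul_le_mul_of_nonneg_left (A.hgap i) hL0)
  choose N c hc0 hcN hcnear hcgap using H
  set K : ℕ := 1 + (Finset.range A.M).sup N with hKdef
  have hK0 : 0 < K := by omega
  have hNK : ∀ i, i < A.M → N i < K := by
    intro i hi
    have : N i ≤ (Finset.range A.M).sup N := Finset.le_sup (Finset.mem_range.mpr hi)
    omega
  set c' : ℕ → ℕ → X := fun i => if i < A.M then c i else fun _ => v with hc'def
  set g' : ℕ → X := fun q => c' (q / K) (q % K) with hg'def
  -- div/mod facts
  have hdm : ∀ i j : ℕ, j < K → (K * i + j) / K = i ∧ (K * i + j) % K = j := by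
    intro i j hj
    constructor
    · rw [Nat.mul_add_div hK0, Nat.div_eq_of_lt hj, Nat.add_zero]
    · rw [Nat.mul_add_mod, Nat.mod_eq_of_lt hj]
  have hc'start : ∀ i : ℕ, c' i 0 = A.g i := by
    intro i
    by_cases hi : i < A.M
    · simp only [hc'def, if_pos hi]; exact hc0 i
    · simp only [hc'def, if_neg hi]
      exact (A.htop i (by omega)).symm
  have hc'end : ∀ i j : ℕ, K - 1 ≤ j → c' i j = A.g (i+1) := by
    intro i j hj
    by_cases hi : i < A.M
    · simp only [hc'def, if_pos hi]
      exact hcN i j (by have := hNK i hi; omega)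
    · simp only [hc'def, if_neg hi]
      exact (A.htop (i+1) (by omega)).symm
  refine ⟨⟨A.M * K, g', A.δ / 2, Nat.mul_pos A.hM hK0, ?_, ?_, ?_, hδ2⟩, rfl, K, hK0, rfl, ?_⟩
  · -- g' 0 = u
    show c' (0 / K) (0 % K) = u
    rw [Nat.zero_div, Nat.zero_mod, hc'start 0, A.h0]
  · -- htop
    intro q hq
    show c' (q / K) (q % K) = v
    have : A.M ≤ q / K := (Nat.le_div_iff_mul_le hK0).mpr hq
    simp only [hc'def, if_neg (by omega : ¬ q / K < A.M)]
  · -- gaps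
    intro q
    set i := q / K with hi
    set j := q % K with hj
    have hjK : j < K := Nat.mod_lt _ hK0
    have hq : K * i + j = q := by rw [hi, hj]; exact Nat.div_add_mod q K
    by_cases hj2 : j + 1 < K
    · have hq1 : q + 1 = K * i + (j+1) := by rw [← hq, Nat.add_assoc]
      have hd1 := hdm i (j+1) hj2
      show dist (c' (q/K) (q%K)) (c' ((q+1)/K) ((q+1)%K)) ≤ A.δ / 2
      rw [hq1, hd1.1, hd1.2, ← hi, ← hj]
      by_cases hiM : i < A.M
      · simp only [hc'def, if_pos hiM]
        exact hcgap i j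
      · simp only [hc'def, if_neg hiM]
        simp [hδ2.le]
    · have hjeq : j + 1 = K := by omega
      have hq1 : q + 1 = K * (i+1) + 0 := by
        rw [← hq, Nat.add_assoc, hjeq, Nat.add_zero, Nat.mul_succ]
      have hd1 := hdm (i+1) 0 hK0
      show dist (c' (q/K) (q%K)) (c' ((q+1)/K) ((q+1)%K)) ≤ A.δ / 2
      rw [hq1, hd1.1, hd1.2, ← hi, ← hj]
      rw [hc'start (i+1), hc'end i j (by omega)]
      simp [hδ2.le]
  · -- near
    intro q
    set i := q / K with hi
    set j := q % K with hj
    show dist (c' i j) (A.g i) ≤ L * A.δ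
    by_cases hiM : i < A.M
    · simp only [hc'def, if_pos hiM]
      exact hcnear i j
    · simp only [hc'def, if_neg hiM]
      rw [A.htop i (by omega)]
      simp only [dist_self]
      exact mul_nonneg hL0 A.hδ.le
noncomputable def lvls (hL : 1 ≤ L)
    (hbt : ∀ a b : X, ∃ E : Set X, a ∈ E ∧ b ∈ E ∧ IsConnected E ∧
      EMetric.diam E ≤ ENNReal.ofReal (L * dist a b))
    (u v : X) (A0 : Lvl X u v) : ℕ → Lvl X u v
  | 0 => A0
  | (m+1) => (step_ex hL hbt u v (lvls hL hbt u v A0 m)).choose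

lemma lvls_spec (hL : 1 ≤ L)
    (hbt : ∀ a b : X, ∃ E : Set X, a ∈ E ∧ b ∈ E ∧ IsConnected E ∧
      EMetric.diam E ≤ ENNReal.ofReal (L * dist a b))
    (u v : X) (A0 : Lvl X u v) (m : ℕ) :
    (lvls hL hbt u v A0 (m+1)).δ = (lvls hL hbt u v A0 m).δ / 2 ∧
    ∃ K : ℕ, 0 < K ∧ (lvls hL hbt u v A0 (m+1)).M = (lvls hL hbt u v A0 m).M * K ∧
      ∀ q : ℕ, dist ((lvls hL hbt u v A0 (m+1)).g q)
        ((lvls hL hbt u v A0 m).g (q / K)) ≤ L * (lvls hL hbt u v A0 m).δ :=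
  (step_ex hL hbt u v (lvls hL hbt u v A0 m)).choose_spec

lemma local_path (hL : 1 ≤ L)
    (hbt : ∀ a b : X, ∃ E : Set X, a ∈ E ∧ b ∈ E ∧ IsConnected E ∧
      EMetric.diam E ≤ ENNReal.ofReal (L * dist a b))
    {u v : X} {R : ℝ} (hcomp : IsCompact (closedBall u R))
    (hd : 0 < dist u v) (hR : 4 * L * dist u v ≤ R) :
    ∃ γ : Path u v, ∀ s : unitInterval, dist (γ s) u ≤ 4 * L * dist u v := by
  have hL0 : (0:ℝ) ≤ L := by linarith
  set d : ℝ := dist u v with hddef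
  have hLd : 0 < L * d := by positivity
  -- level 0
  have hA0gap : ∀ i : ℕ, dist ((fun i => if i = 0 then u else v) i)
      ((fun i => if i = 0 then u else v) (i+1)) ≤ d := by
    intro i
    by_cases h : i = 0
    · subst h
      simp only [if_pos rfl, if_neg (by omega : ¬ (0+1 = 0))]
      exact le_of_eq hddef.symm
    · simp only [if_neg h, if_neg (by omega : ¬ (i+1 = 0)), dist_self]
      exact hd.le
  have hA0top : ∀ i : ℕ, 1 ≤ i → (fun i => if i = 0 then u else v) i = v := by
    intro i hi
    simp only [if_neg (by omega : ¬ (i = 0))]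
  set A0 : Lvl X u v := ⟨1, fun i => if i = 0 then u else v, d, Nat.one_pos,
    by simp, hA0top, hA0gap, hd⟩ with hA0def
  set Lv : ℕ → Lvl X u v := lvls hL hbt u v A0 with hLvdef
  -- (a) delta values
  have hδval : ∀ m, (Lv m).δ = d * (1/2)^m := by
    intro m
    induction m with
    | zero => simp [hLvdef, lvls, hA0def]
    | succ m ih =>
      have := (lvls_spec hL hbt u v A0 m).1
      rw [hLvdef] at *
      rw [this, ih]
      ring
  -- (b) all points within 3 L d of u
  have hball : ∀ m q, dist ((Lv m).g q) u ≤ d + 2*L*d*(1 - (1/2)^m) := by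
    intro m
    induction m with
    | zero =>
      intro q
      show dist (A0.g q) u ≤ _
      have : A0.g q = u ∨ A0.g q = v := by
        by_cases hq : q = 0
        · left; rw [hq, A0.h0]
        · right; exact A0.htop q (by show 1 ≤ q; omega)
      have hrhs : d + 2*L*d*(1 - (1/2:ℝ)^0) = d := by norm_num
      rcases this with h | h
      · rw [h, dist_self, hrhs]; exact hd.le
      · rw [h, dist_comm, ← hddef, hrhs]
    | succ m ih =>
      intro q
      obtain ⟨hδs, K, hK0, hMK, hnear⟩ := lvls_spec hL hbt u v A0 m
      have h1 := hnear q
      have h2 := ih (q / K)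
      have h3 : dist ((Lv (m+1)).g q) u ≤ L * (Lv m).δ + (d + 2*L*d*(1 - (1/2)^m)) :=
        (dist_triangle _ _ _).trans (by exact add_le_add h1 h2)
      rw [hδval m] at h3
      calc dist ((Lv (m+1)).g q) u ≤ L * (d * (1/2)^m) + (d + 2*L*d*(1 - (1/2)^m)) := h3
        _ = d + 2*L*d*(1 - (1/2)^(m+1)) := by ring
  have hball' : ∀ m q, dist ((Lv m).g q) u ≤ 3 * (L * d) := by
    intro m q
    have h1 := hball m q
    have h2 : (0:ℝ) ≤ (1/2:ℝ)^m := by positivity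
    have h3 : ((1:ℝ)/2)^m ≤ 1 := pow_le_one₀ (by norm_num) (by norm_num)
    have h4 : d ≤ L * d := by nlinarith
    nlinarith
  -- index sequences
  set idx : ℕ → ℝ → ℕ := fun m t => ⌊t * ((Lv m).M : ℝ)⌋₊ with hidxdef
  set q : ℕ → ℝ → X := fun m t => (Lv m).g (idx m t) with hqdef
  -- (d) consecutive estimate
  have hconsec : ∀ m (t : ℝ), dist (q (m+1) t) (q m t) ≤ L * d * (1/2)^m := by
    intro m t
    obtain ⟨hδs, K, hK0, hMK, hnear⟩ := lvls_spec hL hbt u v A0 m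
    have hfloor : idx (m+1) t / K = idx m t := by
      have hKne : ((K:ℕ):ℝ) ≠ 0 := Nat.cast_ne_zero.mpr hK0.ne'
      have h1 : (( (Lv (m+1)).M : ℕ) : ℝ) = ((Lv m).M : ℝ) * K := by
        rw [hMK]; push_cast; ring
      have h2 : t * (((Lv (m+1)).M : ℕ) : ℝ) = (t * ((Lv m).M : ℝ)) * K := by
        rw [h1]; ring
      show ⌊t * (((Lv (m+1)).M : ℕ) : ℝ)⌋₊ / K = ⌊t * ((Lv m).M : ℝ)⌋₊
      rw [h2, ← Nat.floor_div_natCast ((t * ((Lv m).M : ℝ)) * K) K]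
      rw [mul_div_cancel_right₀ _ hKne]
    have h1 := hnear (idx (m+1) t)
    rw [hfloor] at h1
    rw [hδval m] at h1
    calc dist (q (m+1) t) (q m t) ≤ L * (d * (1/2)^m) := h1
      _ = L * d * (1/2)^m := by ring
  -- (e) tail estimate
  have htail : ∀ m k (t : ℝ), dist (q m t) (q (m+k) t) ≤ 2*L*d*((1/2)^m - (1/2)^(m+k)) := by
    intro m k t
    induction k with
    | zero => simp
    | succ k ih =>
      have h1 := hconsec (m+k) t
      have h2 : dist (q m t) (q (m+(k+1)) t) ≤
          dist (q m t) (q (m+k) t) + dist (q (m+k+1) t) (q (m+k) t) := by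
        rw [dist_comm (q (m+k+1) t) (q (m+k) t)]
        exact dist_triangle _ _ _
      have h3 : m + (k+1) = m + k + 1 := by omega
      rw [h3]
      calc dist (q m t) (q (m+k+1) t)
          ≤ 2*L*d*((1/2)^m - (1/2)^(m+k)) + L*d*(1/2)^(m+k) := by
            rw [h3] at h2; exact h2.trans (add_le_add ih h1)
        _ = 2*L*d*((1/2)^m - (1/2)^(m+k+1)) := by ring
  have htail' : ∀ m n (t : ℝ), m ≤ n → dist (q m t) (q n t) ≤ 2*L*d*(1/2)^m := by
    intro m n t hmn
    obtain ⟨k, rfl⟩ := Nat.exists_eq_add_of_le hmn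
    refine (htail m k t).trans ?_
    have : (0:ℝ) ≤ (1/2:ℝ)^(m+k) := by positivity
    nlinarith
  -- (f) Cauchy
  have hcauchy : ∀ t : ℝ, CauchySeq (fun m => q m t) := by
    intro t
    apply cauchySeq_of_le_geometric (1/2 : ℝ) (L*d) (by norm_num)
    intro n
    rw [dist_comm]
    exact hconsec n t
  -- (g) membership
  have hmem : ∀ (t : ℝ) m, q m t ∈ closedBall u R := by
    intro t m
    rw [mem_closedBall]
    have := hball' m (idx m t)
    nlinarith
  -- (h) limits
  have hlim : ∀ t : ℝ, ∃ p ∈ closedBall u R, Tendsto (fun m => q m t) atTop (𝓝 p) :=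
    fun t => cauchySeq_tendsto_of_isComplete hcomp.isComplete (hmem t) (hcauchy t)
  choose Γ hΓmem hΓtend using hlim
  -- (j) distance to limit
  have hΓq : ∀ (t : ℝ) m, dist (Γ t) (q m t) ≤ 2*L*d*(1/2)^m := by
    intro t m
    have h1 : Tendsto (fun n => dist (q n t) (q m t)) atTop (𝓝 (dist (Γ t) (q m t))) :=
      (hΓtend t).dist tendsto_const_nhds
    refine le_of_tendsto h1 ?_
    filter_upwards [eventually_ge_atTop m] with n hn
    rw [dist_comm]
    exact htail' m n t hn
  -- (k) range bound
  have hΓball : ∀ t : ℝ, dist (Γ t) u ≤ 3 * (L * d) := by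
    intro t
    have h1 : Γ t ∈ closedBall u (3 * (L*d)) := by
      refine (Metric.isClosed_closedBall).mem_of_tendsto (hΓtend t) ?_
      filter_upwards with m
      exact mem_closedBall.mpr (hball' m (idx m t))
    exact mem_closedBall.mp h1
  -- endpoints
  have hq0 : ∀ m, q m (0:ℝ) = u := by
    intro m
    show (Lv m).g ⌊(0:ℝ) * ((Lv m).M : ℝ)⌋₊ = u
    rw [zero_mul, Nat.floor_zero, (Lv m).h0]
  have hq1 : ∀ m, q m (1:ℝ) = v := by
    intro m
    show (Lv m).g ⌊(1:ℝ) * ((Lv m).M : ℝ)⌋₊ = v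
    rw [one_mul, Nat.floor_natCast]
    exact (Lv m).htop _ le_rfl
  have hΓ0 : Γ 0 = u := by
    have h1 : Tendsto (fun m => q m (0:ℝ)) atTop (𝓝 u) := by
      simp only [hq0]; exact tendsto_const_nhds
    exact tendsto_nhds_unique (hΓtend 0) h1
  have hΓ1 : Γ 1 = v := by
    have h1 : Tendsto (fun m => q m (1:ℝ)) atTop (𝓝 v) := by
      simp only [hq1]; exact tendsto_const_nhds
    exact tendsto_nhds_unique (hΓtend 1) h1
  -- gap helper
  have hgp : ∀ m (i j : ℕ), i ≤ j → j ≤ i + 1 →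
      dist ((Lv m).g i) ((Lv m).g j) ≤ (Lv m).δ := by
    intro m i j h1 h2
    have : j = i ∨ j = i + 1 := by omega
    rcases this with h | h
    · subst h; simp [(Lv m).hδ.le]
    · subst h; exact (Lv m).hgap i
  -- nearby parameters
  have hclose : ∀ m (s t : ℝ), 0 ≤ s → s ≤ t → t ≤ s + 1 / ((Lv m).M : ℝ) →
      dist (q m s) (q m t) ≤ (Lv m).δ := by
    intro m s t hs hst htb
    have hM0 : (0:ℝ) < ((Lv m).M : ℝ) := by exact_mod_cast (Lv m).hM
    have h1 : idx m s ≤ idx m t := by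
      apply Nat.floor_le_floor
      exact mul_le_mul_of_nonneg_right hst hM0.le
    have h2 : idx m t ≤ idx m s + 1 := by
      have ha : (0:ℝ) ≤ s * ((Lv m).M : ℝ) := mul_nonneg hs hM0.le
      have hb : t * ((Lv m).M : ℝ) ≤ s * ((Lv m).M : ℝ) + 1 := by
        have := mul_le_mul_of_nonneg_right htb hM0.le
        rw [add_mul] at this
        rw [div_mul_cancel₀ _ hM0.ne'] at this
        linarith
      calc idx m t ≤ ⌊s * ((Lv m).M : ℝ) + 1⌋₊ := Nat.floor_le_floor hb
        _ = idx m s + 1 := Nat.floor_add_one ha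
    exact hgp m _ _ h1 h2
  -- continuity of Γ on [0,1]
  have hcont : ∀ (t : ℝ) (ε : ℝ), 0 ≤ t → t ≤ 1 → 0 < ε → ∃ δ' > (0:ℝ),
      ∀ s : ℝ, 0 ≤ s → s ≤ 1 → |s - t| < δ' → dist (Γ s) (Γ t) < ε := by
    intro t ε ht0 ht1 hε
    set C : ℝ := d + 4 * L * d with hCdef
    have hC0 : 0 < C := by nlinarith
    obtain ⟨m, hm⟩ := exists_pow_lt_of_lt_one (div_pos hε hC0) (by norm_num : (1/2:ℝ) < 1)
    have hCm : C * (1/2)^m < ε := by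
      rw [div_eq_mul_inv] at hm
      calc C * (1/2)^m < C * (ε * C⁻¹) := by
            apply mul_lt_mul_of_pos_left hm hC0
        _ = ε := by field_simp
    have hM0 : (0:ℝ) < ((Lv m).M : ℝ) := by exact_mod_cast (Lv m).hM
    refine ⟨1 / ((Lv m).M : ℝ), by positivity, ?_⟩
    intro s hs0 hs1 hst
    have key : dist (q m s) (q m t) ≤ (Lv m).δ := by
      rcases le_total s t with h | h
      · apply hclose m s t hs0 h
        have : |s - t| = t - s := by rw [abs_sub_comm]; exact abs_of_nonneg (by linarith)
        linarith [this ▸ hst.le]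
      · rw [dist_comm]
        apply hclose m t s ht0 h
        have : |s - t| = s - t := abs_of_nonneg (by linarith)
        linarith [this ▸ hst.le]
    have h1 := hΓq s m
    have h2 := hΓq t m
    have h3 : dist (Γ s) (Γ t) ≤ dist (Γ s) (q m s) + dist (q m s) (q m t) + dist (q m t) (Γ t) :=
      dist_triangle4 _ _ _ _
    rw [dist_comm (q m t) (Γ t)] at h3
    have h4 : (Lv m).δ = d * (1/2)^m := hδval m
    have h5 : dist (Γ s) (Γ t) ≤ C * (1/2)^m := by
      rw [hCdef]
      calc dist (Γ s) (Γ t) ≤ 2*L*d*(1/2)^m + d*(1/2)^m + 2*L*d*(1/2)^m := by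
            refine h3.trans ?_
            refine add_le_add (add_le_add h1 ?_) h2
            rw [← h4]; exact key
        _ = (d + 4*L*d) * (1/2)^m := by ring
    exact lt_of_le_of_lt h5 hCm
  -- build the path
  refine ⟨{ toFun := fun s => Γ s, continuous_toFun := ?_,
            source' := by simpa using hΓ0, target' := by simpa using hΓ1 },
          ?_⟩
  · rw [Metric.continuous_iff]
    intro t ε hε
    obtain ⟨δ', hδ'0, hδ'⟩ := hcont t.1 ε t.2.1 t.2.2 hε
    refine ⟨δ', hδ'0, fun s hs => ?_⟩
    apply hδ' s.1 s.2.1 s.2.2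
    rw [Subtype.dist_eq] at hs
    exact hs
  · intro s
    show dist (Γ s.1) u ≤ 4 * L * d
    have := hΓball s.1
    nlinarith
theorem main {X : Type*} [MetricSpace X] [LocallyCompactSpace X]
    {L : ℝ} (hL : 1 ≤ L)
    (hbt : ∀ x y : X, ∃ E : Set X, x ∈ E ∧ y ∈ E ∧ IsConnected E ∧
      EMetric.diam E ≤ ENNReal.ofReal (L * dist x y))
    {L' : ℝ} (hL' : L < L') (x y : X) :
    ∃ γ : Path x y,
      EMetric.diam (Set.range fun t => γ t) ≤ ENNReal.ofReal (L' * dist x y) := by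
  have hL0 : (0:ℝ) ≤ L := by linarith
  by_cases hxy : x = y
  · subst hxy
    refine ⟨Path.refl x, ?_⟩
    have h1 : (Set.range fun t => (Path.refl x) t) = {x} := Path.refl_range
    rw [h1, show EMetric.diam ({x} : Set X) = 0 from EMetric.diam_singleton]
    exact zero_le
  · have hd : 0 < dist x y := dist_pos.mpr hxy
    set d : ℝ := dist x y with hddef
    set τ : ℝ := (L' - L) * d / 4 with hτdef
    have hτ : 0 < τ := by
      rw [hτdef]
      have : 0 < L' - L := by linarith
      positivity
    obtain ⟨E₀, hxE₀, hyE₀, hE₀conn, hE₀diam⟩ := hbt x y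
    -- compact radii
    have hρ : ∀ b : X, ∃ r, 0 < r ∧ IsCompact (closedBall b r) := by
      intro b
      obtain ⟨r, hr0, hrc⟩ := exists_isCompact_closedBall b
      exact ⟨r, hr0, hrc⟩
    choose ρ hρpos hρcomp using hρ
    set r : X → ℝ := fun b => min (τ / (8*L)) (ρ b / (8*L)) with hrdef
    have hrpos : ∀ b, 0 < r b := by
      intro b
      apply lt_min
      · positivity
      · have := hρpos b; positivity
    -- local connection
    have keylocal : ∀ b z : X, dist b z ≤ r b →
        ∃ γ : Path b z, ∀ s : unitInterval, dist (γ s) b ≤ τ / 2 := by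
      intro b z hbz
      by_cases h0 : dist b z = 0
      · have : b = z := by rwa [dist_eq_zero] at h0
        subst this
        refine ⟨Path.refl b, fun s => ?_⟩
        have : (Path.refl b) s = b := rfl
        rw [this, dist_self]
        positivity
      · have hd' : 0 < dist b z := lt_of_le_of_ne dist_nonneg (Ne.symm h0)
        have hrle1 : dist b z ≤ τ / (8*L) := le_trans hbz (min_le_left _ _)
        have hrle2 : dist b z ≤ ρ b / (8*L) := le_trans hbz (min_le_right _ _)
        have hL1 : (0:ℝ) < L := by linarith
        have hR : 4 * L * dist b z ≤ ρ b := by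
          have h1 : 4 * L * dist b z ≤ 4 * L * (ρ b / (8*L)) :=
            mul_le_mul_of_nonneg_left hrle2 (by positivity)
          have h2 : 4 * L * (ρ b / (8*L)) = ρ b / 2 := by field_simp; ring
          have := hρpos b
          linarith [h1, h2 ▸ h1]
        obtain ⟨γ, hγ⟩ := local_path hL hbt (hρcomp b) hd' hR
        refine ⟨γ, fun s => ?_⟩
        have h1 := hγ s
        have h2 : 4 * L * dist b z ≤ 4 * L * (τ / (8*L)) :=
          mul_le_mul_of_nonneg_left hrle1 (by positivity)
        have h3 : 4 * L * (τ / (8*L)) = τ / 2 := by field_simp; ring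
        linarith [h3 ▸ h2]
    -- reachable set
    set U : Set X := {b | b ∈ E₀ ∧ ∃ γ : Path x b, ∀ p ∈ range (⇑γ), infDist p E₀ ≤ τ}
      with hUdef
    have hxU : x ∈ U := by
      refine ⟨hxE₀, Path.refl x, ?_⟩
      intro p hp
      rw [Path.refl_range] at hp
      rw [mem_singleton_iff] at hp
      subst hp
      rw [infDist_zero_of_mem hxE₀]
      exact hτ.le
    have hU_ext : ∀ b, b ∈ U → ∀ z, z ∈ E₀ → dist b z ≤ r b → z ∈ U := by
      rintro b ⟨hbE, γ₁, hγ₁⟩ z hzE hbz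
      obtain ⟨γ₂, hγ₂⟩ := keylocal b z hbz
      refine ⟨hzE, γ₁.trans γ₂, ?_⟩
      intro p hp
      rw [Path.trans_range] at hp
      rcases hp with hp | hp
      · exact hγ₁ p hp
      · obtain ⟨s, rfl⟩ := hp
        have h1 : infDist (γ₂ s) E₀ ≤ dist (γ₂ s) b := infDist_le_dist_of_mem hbE
        have h2 := hγ₂ s
        linarith
    have hU_ext' : ∀ b, b ∈ E₀ → ∀ z, z ∈ U → dist b z ≤ r b → b ∈ U := by
      rintro b hbE z ⟨hzE, γ₁, hγ₁⟩ hbz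
      obtain ⟨γ₂, hγ₂⟩ := keylocal b z hbz
      refine ⟨hbE, γ₁.trans γ₂.symm, ?_⟩
      intro p hp
      rw [Path.trans_range] at hp
      rcases hp with hp | hp
      · exact hγ₁ p hp
      · rw [Path.symm_range] at hp
        obtain ⟨s, rfl⟩ := hp
        have h1 : infDist (γ₂ s) E₀ ≤ dist (γ₂ s) b := infDist_le_dist_of_mem hbE
        have h2 := hγ₂ s
        linarith
    -- connectedness argument
    have hyU : y ∈ U := by
      by_contra hyU
      set V : Set X := ⋃ b ∈ U, ball b (r b) with hVdef
      set W : Set X := ⋃ b ∈ E₀ \ U, ball b (r b) with hWdef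
      have hVo : IsOpen V := isOpen_biUnion fun _ _ => isOpen_ball
      have hWo : IsOpen W := isOpen_biUnion fun _ _ => isOpen_ball
      have hcover : E₀ ⊆ V ∪ W := by
        intro b hb
        by_cases hbU : b ∈ U
        · exact Or.inl (mem_biUnion hbU (mem_ball_self (hrpos b)))
        · exact Or.inr (mem_biUnion ⟨hb, hbU⟩ (mem_ball_self (hrpos b)))
      have hVne : (E₀ ∩ V).Nonempty := ⟨x, hxE₀, mem_biUnion hxU (mem_ball_self (hrpos x))⟩
      have hWne : (E₀ ∩ W).Nonempty := ⟨y, hyE₀, mem_biUnion ⟨hyE₀, hyU⟩ (mem_ball_self (hrpos y))⟩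
      obtain ⟨z, hzE, hzV, hzW⟩ := hE₀conn.isPreconnected V W hVo hWo hcover hVne hWne
      obtain ⟨b, hbU, hzb⟩ := mem_iUnion₂.mp hzV
      obtain ⟨b', hb'EU, hzb'⟩ := mem_iUnion₂.mp hzW
      have hzU : z ∈ U := by
        apply hU_ext b hbU z hzE
        rw [dist_comm]
        exact (mem_ball.mp hzb).le
      have : b' ∈ U := by
        apply hU_ext' b' hb'EU.1 z hzU
        rw [dist_comm]
        exact (mem_ball.mp hzb').le
      exact hb'EU.2 this
    obtain ⟨-, γ, hγ⟩ := hyU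
    refine ⟨γ, ?_⟩
    apply EMetric.diam_le
    intro p hp q hq
    rw [edist_dist]
    apply ENNReal.ofReal_le_ofReal
    have hpE : infDist p E₀ ≤ τ := hγ p hp
    have hqE : infDist q E₀ ≤ τ := hγ q hq
    have hne : E₀.Nonempty := ⟨x, hxE₀⟩
    obtain ⟨ep, hepE, hep⟩ := (infDist_lt_iff hne).mp (lt_of_le_of_lt hpE (by linarith : τ < 2*τ))
    obtain ⟨eq', heqE, heq⟩ := (infDist_lt_iff hne).mp (lt_of_le_of_lt hqE (by linarith : τ < 2*τ))
    have hee : dist ep eq' ≤ L * d :=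
      dist_le_of_mem_diam (by positivity) hE₀diam hepE heqE
    have h4 : dist p q ≤ dist p ep + dist ep eq' + dist eq' q := dist_triangle4 _ _ _ _
    have h5 : dist eq' q = dist q eq' := dist_comm _ _
    have hτ4 : 4 * τ = (L' - L) * d := by rw [hτdef]; ring
    calc dist p q ≤ 2*τ + L*d + 2*τ := by linarith [h5 ▸ h4]
      _ = L' * d := by linarith [hτ4]

end BTProof

/-- In a locally compact metric space with `L`-bounded turning, for every
`L' > L` any two points can be joined by a path of diameter at most `L'` times their distance. -/
theorem statement_1 {X : Type*} [MetricSpace X] [LocallyCompactSpace X]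
    {L : ℝ} (hL : 1 ≤ L)
    (hbt : ∀ x y : X, ∃ E : Set X, x ∈ E ∧ y ∈ E ∧ IsConnected E ∧
      EMetric.diam E ≤ ENNReal.ofReal (L * dist x y))
    {L' : ℝ} (hL' : L < L') (x y : X) :
    ∃ γ : Path x y,
      EMetric.diam (Set.range fun t => γ t) ≤ ENNReal.ofReal (L' * dist x y) := by
  exact BTProof.main hL hbt hL' x y
end

section
/- Let Ω, D ⊂ ℝ² be domains and f : (Ω, ρ_Ω) → (D, ρ_D) an η-quasisymmetric homeomorphism, where ρ_Ω, ρ_D are the inner diameter metrics. If γ is an (A, ρ_Ω)-uniform curve in Ω for some A ≥ 1, then f ∘ γ is an (A', ρ_D)-uniform curve in D with A' = 2η(2A). -/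
open Set Metric Filter Topology
open scoped ENNReal

noncomputable section

/-- `S` is a connected component of the complement of `Ω`. -/
def IsComplComponent (Ω S : Set ℂ) : Prop := ∃ z ∈ Ωᶜ, S = connectedComponentIn Ωᶜ z

/-- The inner length metric `λ_Ω`: infimum of lengths of curves in `Ω` joining the points. -/
def innerLen (Ω : Set ℂ) (a b : ℂ) : ℝ≥0∞ :=
  ⨅ γ : {γ : ℝ → ℂ // ContinuousOn γ (Set.Icc 0 1) ∧ Set.MapsTo γ (Set.Icc 0 1) Ω ∧
      γ 0 = a ∧ γ 1 = b}, eVariationOn γ.1 (Set.Icc 0 1)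

/-- The inner diameter metric `ρ_Ω`: infimum of diameters of curves in `Ω` joining the points. -/
def innerDiam (Ω : Set ℂ) (a b : ℂ) : ℝ≥0∞ :=
  ⨅ γ : {γ : ℝ → ℂ // ContinuousOn γ (Set.Icc 0 1) ∧ Set.MapsTo γ (Set.Icc 0 1) Ω ∧
      γ 0 = a ∧ γ 1 = b}, EMetric.diam (γ.1 '' Set.Icc 0 1)

/-- An inner `A`-uniform curve (length version) in `Ω`. -/
def IsInnerUniformCurve (A : ℝ) (Ω : Set ℂ) (γ : ℝ → ℂ) : Prop :=
  ContinuousOn γ (Set.Icc 0 1) ∧ Set.MapsTo γ (Set.Icc 0 1) Ω ∧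
  eVariationOn γ (Set.Icc 0 1) ≤ ENNReal.ofReal A * innerLen Ω (γ 0) (γ 1) ∧
  ∀ t ∈ Set.Icc (0:ℝ) 1,
    min (eVariationOn γ (Set.Icc 0 t)) (eVariationOn γ (Set.Icc t 1))
      ≤ ENNReal.ofReal (A * Metric.infDist (γ t) (frontier Ω))

/-- An inner `A`-uniform domain in the plane. -/
def IsInnerUniformDomain (A : ℝ) (Ω : Set ℂ) : Prop :=
  IsOpen Ω ∧ IsConnected Ω ∧
  ∀ a ∈ Ω, ∀ b ∈ Ω, ∃ γ : ℝ → ℂ, IsInnerUniformCurve A Ω γ ∧ γ 0 = a ∧ γ 1 = b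

/-- An `A`-uniform curve in `Ω`. -/
def IsUniformCurve (A : ℝ) (Ω : Set ℂ) (γ : ℝ → ℂ) : Prop :=
  ContinuousOn γ (Set.Icc 0 1) ∧ Set.MapsTo γ (Set.Icc 0 1) Ω ∧
  eVariationOn γ (Set.Icc 0 1) ≤ ENNReal.ofReal (A * dist (γ 0) (γ 1)) ∧
  ∀ t ∈ Set.Icc (0:ℝ) 1,
    min (eVariationOn γ (Set.Icc 0 t)) (eVariationOn γ (Set.Icc t 1))
      ≤ ENNReal.ofReal (A * Metric.infDist (γ t) (frontier Ω))

/-- An `A`-uniform domain in the plane. -/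
def IsUniformDomain (A : ℝ) (Ω : Set ℂ) : Prop :=
  IsOpen Ω ∧ IsConnected Ω ∧
  ∀ a ∈ Ω, ∀ b ∈ Ω, ∃ γ : ℝ → ℂ, IsUniformCurve A Ω γ ∧ γ 0 = a ∧ γ 1 = b
/-- An `(A, ρ_Ω)`-uniform curve (diameter version) in `Ω`. -/
def IsInnerDiamUniformCurve (A : ℝ) (Ω : Set ℂ) (γ : ℝ → ℂ) : Prop :=
  ContinuousOn γ (Set.Icc 0 1) ∧ Set.MapsTo γ (Set.Icc 0 1) Ω ∧
  EMetric.diam (γ '' Set.Icc 0 1) ≤ ENNReal.ofReal A * innerDiam Ω (γ 0) (γ 1) ∧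
  ∀ t ∈ Set.Icc (0:ℝ) 1,
    min (EMetric.diam (γ '' Set.Icc 0 t)) (EMetric.diam (γ '' Set.Icc t 1))
      ≤ ENNReal.ofReal (A * Metric.infDist (γ t) (frontier Ω))

lemma edist_le_innerDiam (Ω : Set ℂ) (a b : ℂ) : edist a b ≤ innerDiam Ω a b := by
  refine le_iInf fun γ => ?_
  obtain ⟨hc, hm, h0, h1⟩ := γ.2
  exact EMetric.edist_le_diam_of_mem ⟨0, ⟨le_refl _, zero_le_one⟩, h0⟩
    ⟨1, ⟨zero_le_one, le_refl _⟩, h1⟩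

lemma innerDiam_le_curve {Ω : Set ℂ} {γ : ℝ → ℂ} {a b : ℝ} (hab : a ≤ b)
    (hc : ContinuousOn γ (Icc a b)) (hm : MapsTo γ (Icc a b) Ω) :
    innerDiam Ω (γ a) (γ b) ≤ EMetric.diam (γ '' Icc a b) := by
  set σ : ℝ → ℂ := fun u => γ (a + u * (b - a)) with hσ
  have haff : ∀ u ∈ Icc (0:ℝ) 1, a + u * (b - a) ∈ Icc a b := by
    intro u hu
    constructor
    · nlinarith [hu.1, hu.2]
    · nlinarith [hu.1, hu.2]
  have hcσ : ContinuousOn σ (Icc 0 1) :=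
    hc.comp (Continuous.continuousOn (by continuity)) haff
  have hmσ : MapsTo σ (Icc 0 1) Ω := fun u hu => hm (haff u hu)
  have h0 : σ 0 = γ a := by simp [hσ]
  have h1 : σ 1 = γ b := by simp [hσ]
  have key : innerDiam Ω (γ a) (γ b) ≤ EMetric.diam (σ '' Icc 0 1) :=
    iInf_le (fun γ' : {γ' : ℝ → ℂ // ContinuousOn γ' (Set.Icc 0 1) ∧
        Set.MapsTo γ' (Set.Icc 0 1) Ω ∧ γ' 0 = γ a ∧ γ' 1 = γ b} =>
      EMetric.diam (γ'.1 '' Set.Icc 0 1)) ⟨σ, hcσ, hmσ, h0, h1⟩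
  refine key.trans (EMetric.diam_mono ?_)
  rintro _ ⟨u, hu, rfl⟩
  exact ⟨a + u * (b - a), haff u hu, rfl⟩

lemma innerDiam_comm_le (Ω : Set ℂ) (a b : ℂ) : innerDiam Ω b a ≤ innerDiam Ω a b := by
  refine le_iInf fun γ => ?_
  obtain ⟨hc, hm, h0, h1⟩ := γ.2
  have hmem : ∀ u ∈ Icc (0:ℝ) 1, 1 - u ∈ Icc (0:ℝ) 1 := by
    intro u hu; exact ⟨by linarith [hu.2], by linarith [hu.1]⟩
  have key : innerDiam Ω b a ≤ EMetric.diam ((fun u => γ.1 (1 - u)) '' Icc 0 1) :=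
    iInf_le (fun γ' : {γ' : ℝ → ℂ // ContinuousOn γ' (Set.Icc 0 1) ∧
          Set.MapsTo γ' (Set.Icc 0 1) Ω ∧ γ' 0 = b ∧ γ' 1 = a} =>
        EMetric.diam (γ'.1 '' Set.Icc 0 1)) ⟨fun u => γ.1 (1 - u),
      hc.comp (Continuous.continuousOn (by continuity)) hmem,
      fun u hu => hm (hmem u hu), by simpa using h1, by simpa using h0⟩
  refine key.trans (EMetric.diam_mono ?_)
  rintro _ ⟨u, hu, rfl⟩
  exact ⟨1 - u, hmem u hu, rfl⟩

lemma innerDiam_comm (Ω : Set ℂ) (a b : ℂ) : innerDiam Ω a b = innerDiam Ω b a :=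
  le_antisymm (innerDiam_comm_le Ω b a) (innerDiam_comm_le Ω a b)

lemma innerDiam_le_edist_of_segment {Ω : Set ℂ} {a b : ℂ} (h : segment ℝ a b ⊆ Ω) :
    innerDiam Ω a b ≤ edist a b := by
  set σ : ℝ → ℂ := fun u => (1 - u) • a + u • b with hσ
  have hmem : ∀ u ∈ Icc (0:ℝ) 1, σ u ∈ segment ℝ a b := fun u hu =>
    ⟨1 - u, u, by linarith [hu.2], hu.1, by ring, rfl⟩
  have key : innerDiam Ω a b ≤ EMetric.diam (σ '' Icc 0 1) :=
    iInf_le (fun γ' : {γ' : ℝ → ℂ // ContinuousOn γ' (Set.Icc 0 1) ∧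
          Set.MapsTo γ' (Set.Icc 0 1) Ω ∧ γ' 0 = a ∧ γ' 1 = b} =>
        EMetric.diam (γ'.1 '' Set.Icc 0 1)) ⟨σ, (Continuous.continuousOn (by continuity)),
      fun u hu => h (hmem u hu), by simp [hσ], by simp [hσ]⟩
  refine key.trans (EMetric.diam_le ?_)
  rintro _ ⟨u, hu, rfl⟩ _ ⟨v, hv, rfl⟩
  rw [edist_dist, edist_dist]
  refine ENNReal.ofReal_le_ofReal ?_
  have hd : σ u - σ v = (v - u) • (a - b) := by
    simp only [hσ]; module
  rw [dist_eq_norm, hd, norm_smul, Real.norm_eq_abs]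
  have h1 : |v - u| ≤ 1 := by
    rw [abs_le]; constructor
    · linarith [hv.1, hu.2]
    · linarith [hv.2, hu.1]
  calc |v - u| * ‖a - b‖ ≤ 1 * ‖a - b‖ := by
        exact mul_le_mul_of_nonneg_right h1 (norm_nonneg _)
    _ = dist a b := by rw [one_mul, dist_eq_norm]

lemma innerDiam_univ (a b : ℂ) : innerDiam univ a b = edist a b :=
  le_antisymm (innerDiam_le_edist_of_segment (subset_univ _)) (edist_le_innerDiam _ _ _)

lemma innerDiam_lt_top {Ω : Set ℂ} (hΩo : IsOpen Ω) (hΩc : IsConnected Ω)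
    {a b : ℂ} (ha : a ∈ Ω) (hb : b ∈ Ω) : innerDiam Ω a b < ⊤ := by
  have hpc : IsPathConnected Ω := (hΩo.isConnected_iff_isPathConnected).mp hΩc
  obtain ⟨p, hp⟩ := hpc.joinedIn a ha b hb
  have hmap : MapsTo p.extend (Icc 0 1) Ω := by
    intro u hu
    rw [p.extend_apply hu]
    exact hp _
  have key : innerDiam Ω a b ≤ EMetric.diam (p.extend '' Icc 0 1) :=
    iInf_le (fun γ' : {γ' : ℝ → ℂ // ContinuousOn γ' (Set.Icc 0 1) ∧
          Set.MapsTo γ' (Set.Icc 0 1) Ω ∧ γ' 0 = a ∧ γ' 1 = b} =>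
        EMetric.diam (γ'.1 '' Set.Icc 0 1)) ⟨p.extend, p.continuous_extend.continuousOn, hmap, p.extend_zero, p.extend_one⟩
  refine lt_of_le_of_lt key ?_
  have hcpt : IsCompact (p.extend '' Icc 0 1) :=
    (isCompact_Icc).image_of_continuousOn p.continuous_extend.continuousOn
  exact lt_top_iff_ne_top.mpr hcpt.isBounded.ediam_ne_top

lemma ball_infDist_frontier_subset {Ω : Set ℂ} (hΩo : IsOpen Ω) {x : ℂ} (hx : x ∈ Ω) :
    ball x (infDist x (frontier Ω)) ⊆ Ω := by
  by_cases huniv : Ω = univ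
  · subst huniv; exact subset_univ _
  obtain ⟨y, hy, hdy⟩ := exists_mem_frontier_infDist_compl_eq_dist hx huniv
  have h1 : infDist x (frontier Ω) ≤ infDist x Ωᶜ := by
    rw [hdy]; exact infDist_le_dist_of_mem hy
  exact (ball_subset_ball h1).trans ball_infDist_compl_subset

lemma eta_nonneg {η : ℝ → ℝ} (hη : StrictMonoOn η (Set.Ici 0)) (hη0 : η 0 = 0)
    {t : ℝ} (ht : 0 ≤ t) : 0 ≤ η t := by
  rcases eq_or_lt_of_le ht with h | h
  · rw [← h, hη0]
  · have := hη (self_mem_Ici) (mem_Ici.mpr ht) h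
    linarith [hη0]

lemma exists_eta_small {η : ℝ → ℝ} (hη : StrictMonoOn η (Set.Ici 0)) (hη0 : η 0 = 0)
    (hηsurj : Set.SurjOn η (Set.Ici 0) (Set.Ici 0)) {ε : ℝ} (hε : 0 < ε) :
    ∃ τ > 0, η τ ≤ ε := by
  obtain ⟨τ, hτ, hτε⟩ := hηsurj (mem_Ici.mpr hε.le)
  refine ⟨τ, ?_, hτε.le⟩
  rcases eq_or_lt_of_le (mem_Ici.mp hτ) with h | h
  · exfalso; rw [← h, hη0] at hτε; linarith
  · exact h

/-- Continuity of a quasisymmetric map w.r.t. the Euclidean metrics. -/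
lemma qs_continuousOn (Ω D : Set ℂ) (hΩo : IsOpen Ω)
    (hDo : IsOpen D) (hDc : IsConnected D)
    (η : ℝ → ℝ) (hη : StrictMonoOn η (Set.Ici 0)) (hη0 : η 0 = 0)
    (hηsurj : Set.SurjOn η (Set.Ici 0) (Set.Ici 0))
    (f : ℂ → ℂ) (hf : Set.BijOn f Ω D)
    (hqs : ∀ x₁ ∈ Ω, ∀ x₂ ∈ Ω, ∀ x₃ ∈ Ω, ∀ t : ℝ, 0 ≤ t →
      innerDiam Ω x₁ x₂ ≤ ENNReal.ofReal t * innerDiam Ω x₁ x₃ →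
      innerDiam D (f x₁) (f x₂) ≤ ENNReal.ofReal (η t) * innerDiam D (f x₁) (f x₃)) :
    ContinuousOn f Ω := by
  rw [Metric.continuousOn_iff]
  intro b hb ε hε
  obtain ⟨r, hr, hball⟩ := Metric.isOpen_iff.mp hΩo b hb
  set q : ℂ := b + (r/2 : ℝ) with hq
  have hqb : dist q b = r / 2 := by
    simp [hq, dist_eq_norm]
    linarith
  have hqΩ : q ∈ Ω := hball (by rw [mem_ball, hqb]; linarith)
  have hclow : ENNReal.ofReal (r/2) ≤ innerDiam Ω b q := by
    have := edist_le_innerDiam Ω b q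
    rwa [edist_dist, dist_comm, hqb] at this
  set K := innerDiam D (f b) (f q) with hK
  have hKfin : K ≠ ⊤ := (innerDiam_lt_top hDo hDc (hf.mapsTo hb) (hf.mapsTo hqΩ)).ne
  set m : ℝ := K.toReal + 1 with hm
  have hm0 : 0 < m := by positivity
  obtain ⟨τ, hτ0, hτ⟩ := exists_eta_small hη hη0 hηsurj (ε := ε / (2 * m)) (by positivity)
  refine ⟨min (τ * (r/2)) r, by positivity, fun a ha hab => ?_⟩
  have hab1 : dist a b < r := hab.trans_le (min_le_right _ _)
  have hab2 : dist a b < τ * (r/2) := hab.trans_le (min_le_left _ _)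
  have haball : a ∈ ball b r := by rwa [mem_ball]
  have hseg : segment ℝ b a ⊆ Ω := by
    refine (Convex.segment_subset (convex_ball b r) (mem_ball_self hr) haball).trans hball
  have h1 : innerDiam Ω b a ≤ ENNReal.ofReal τ * innerDiam Ω b q := by
    refine (innerDiam_le_edist_of_segment hseg).trans ?_
    rw [edist_dist, dist_comm]
    calc ENNReal.ofReal (dist a b) ≤ ENNReal.ofReal (τ * (r/2)) :=
          ENNReal.ofReal_le_ofReal hab2.le
      _ = ENNReal.ofReal τ * ENNReal.ofReal (r/2) := ENNReal.ofReal_mul hτ0.le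
      _ ≤ ENNReal.ofReal τ * innerDiam Ω b q := mul_le_mul_right hclow _
  have h2 := hqs b hb a ha q hqΩ τ hτ0.le h1
  have h3 : ENNReal.ofReal (η τ) * K < ENNReal.ofReal ε := by
    calc ENNReal.ofReal (η τ) * K ≤ ENNReal.ofReal (ε / (2*m)) * ENNReal.ofReal K.toReal := by
          rw [ENNReal.ofReal_toReal hKfin]
          exact mul_le_mul_left (ENNReal.ofReal_le_ofReal hτ) _
      _ = ENNReal.ofReal (ε / (2*m) * K.toReal) := (ENNReal.ofReal_mul (by positivity)).symm
      _ < ENNReal.ofReal ε := by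
          refine ENNReal.ofReal_lt_ofReal_iff hε |>.mpr ?_
          have hK1 : K.toReal < m := by rw [hm]; linarith
          calc ε / (2*m) * K.toReal ≤ ε / (2*m) * m := by
                refine mul_le_mul_of_nonneg_left ?_ (by positivity)
                · linarith [ENNReal.toReal_nonneg (a := K)]
            _ = ε / 2 := by field_simp
            _ < ε := by linarith
  have h4 : edist (f b) (f a) < ENNReal.ofReal ε :=
    lt_of_le_of_lt ((edist_le_innerDiam D _ _).trans h2) h3
  rw [edist_dist] at h4
  rw [dist_comm]
  exact (ENNReal.ofReal_lt_ofReal_iff hε).mp (lt_of_le_of_lt (le_refl _) h4) |>.trans_le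
    (le_refl _) |> fun h => h

/-- If `f` is a continuous bijection from `Ω` onto `D` and `x ∈ Ω` with
`closedBall x r ⊆ Ω`, and the frontier of `D` is nonempty, then there is `w ∈ Ω` that is
innerDiam-far from `x` in `Ω` but with `f w` innerDiam-close to `f x` in `D`. -/
lemma exists_far_point {Ω D : Set ℂ} (hΩo : IsOpen Ω) (hDo : IsOpen D)
    {f : ℂ → ℂ} (hf : Set.BijOn f Ω D) (hcont : ContinuousOn f Ω)
    {x : ℂ} (hx : x ∈ Ω) (hfrD : (frontier D).Nonempty) {r : ℝ} (hr : 0 < r)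
    (hball : closedBall x r ⊆ Ω) :
    ∃ w ∈ Ω, ENNReal.ofReal r ≤ innerDiam Ω x w ∧
      innerDiam D (f x) (f w) ≤ ENNReal.ofReal (infDist (f x) (frontier D)) := by
  set dD : ℝ := infDist (f x) (frontier D) with hdDdef
  have hfxD : f x ∈ D := hf.mapsTo hx
  have hdD : 0 < dD := by
    rw [hdDdef]
    refine (isClosed_frontier.notMem_iff_infDist_pos hfrD).mp ?_
    intro hmem
    exact (disjoint_frontier_iff_isOpen.mpr hDo).le_bot ⟨hmem, hfxD⟩ |>.elim
  obtain ⟨ζ, hζfr, hζd⟩ := isClosed_frontier.exists_infDist_eq_dist hfrD (f x)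
  -- the approximating sequence in D
  set c : ℕ → ℝ := fun n => 1 - 1 / (n + 1) with hc
  have hc0 : ∀ n, 0 ≤ c n := by
    intro n
    have : 1 / ((n:ℝ) + 1) ≤ 1 := by
      rw [div_le_one (by positivity)]; linarith [Nat.cast_nonneg (α := ℝ) n]
    simp only [hc]; linarith
  have hc1 : ∀ n, c n < 1 := by
    intro n
    have : 0 < 1 / ((n:ℝ) + 1) := by positivity
    simp only [hc]; linarith
  set w : ℕ → ℂ := fun n => f x + (c n) • (ζ - f x) with hw
  have hwdist : ∀ n, dist (w n) (f x) = c n * dist (f x) ζ := by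
    intro n
    simp only [hw, dist_eq_norm, add_sub_cancel_left, norm_smul, Real.norm_eq_abs,
      abs_of_nonneg (hc0 n)]
    rw [norm_sub_rev, ← dist_eq_norm]
  have hfxζ : 0 < dist (f x) ζ := by rw [← hζd]; exact hdD
  have hwball : ∀ n, w n ∈ ball (f x) dD := by
    intro n
    rw [mem_ball, hwdist n, hdDdef, hζd]
    calc c n * dist (f x) ζ < 1 * dist (f x) ζ := by
          exact mul_lt_mul_of_pos_right (hc1 n) hfxζ
      _ = dist (f x) ζ := one_mul _
  have hballD : ball (f x) dD ⊆ D := ball_infDist_frontier_subset hDo hfxD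
  have hwD : ∀ n, w n ∈ D := fun n => hballD (hwball n)
  have hwnear : ∀ n, innerDiam D (f x) (w n) ≤ ENNReal.ofReal dD := by
    intro n
    have hseg : segment ℝ (f x) (w n) ⊆ D :=
      ((convex_ball (f x) dD).segment_subset (mem_ball_self hdD) (hwball n)).trans hballD
    refine (innerDiam_le_edist_of_segment hseg).trans ?_
    rw [edist_dist, dist_comm]
    refine ENNReal.ofReal_le_ofReal ?_
    rw [hwdist n, hdDdef, hζd]
    rw [hdDdef, hζd] at hdD
    calc c n * dist (f x) ζ ≤ 1 * dist (f x) ζ :=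
          mul_le_mul_of_nonneg_right (hc1 n).le hdD.le
      _ = dist (f x) ζ := one_mul _
  -- preimages
  have hsur : ∀ n, ∃ z ∈ Ω, f z = w n := fun n => hf.surjOn (hwD n)
  choose z hzΩ hfz using hsur
  -- main claim : some z n is innerDiam-far from x
  by_contra hcon
  push_neg at hcon
  have hznear : ∀ n, z n ∈ closedBall x r := by
    intro n
    have hQ : innerDiam D (f x) (f (z n)) ≤ ENNReal.ofReal dD := by
      rw [hfz n]; exact hwnear n
    have hP : innerDiam Ω x (z n) < ENNReal.ofReal r := by
      by_contra h
      push_neg at h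
      exact absurd hQ (not_le.mpr (hcon (z n) (hzΩ n) h))
    have := lt_of_le_of_lt (edist_le_innerDiam Ω x (z n)) hP
    rw [edist_dist] at this
    rw [mem_closedBall, dist_comm]
    exact ((ENNReal.ofReal_lt_ofReal_iff hr).mp this).le
  obtain ⟨a, haK, φ, hφ, hlim⟩ := (isCompact_closedBall x r).tendsto_subseq hznear
  have haΩ : a ∈ Ω := hball haK
  have hca : ContinuousAt f a := hcont.continuousAt (hΩo.mem_nhds haΩ)
  have hlim2 : Tendsto (w ∘ φ) atTop (𝓝 (f a)) := by
    have : Tendsto (f ∘ (z ∘ φ)) atTop (𝓝 (f a)) := hca.tendsto.comp hlim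
    convert this using 1
    funext n
    simp only [Function.comp_apply, hfz]
  have hctend : Tendsto c atTop (𝓝 1) := by
    have h0 : Tendsto (fun n : ℕ => 1 / ((n:ℝ) + 1)) atTop (𝓝 0) :=
      tendsto_one_div_add_atTop_nhds_zero_nat
    have := h0.const_sub (1:ℝ)
    simpa [hc] using this
  have hwtend : Tendsto w atTop (𝓝 ζ) := by
    have h1 : Tendsto (fun n => (c n) • (ζ - f x)) atTop (𝓝 ((1:ℝ) • (ζ - f x))) :=
      hctend.smul_const _
    have h2 := h1.const_add (f x)
    rw [one_smul] at h2
    convert h2 using 2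
    abel
  have hwφ : Tendsto (w ∘ φ) atTop (𝓝 ζ) := hwtend.comp hφ.tendsto_atTop
  have hfaζ : f a = ζ := tendsto_nhds_unique hlim2 hwφ
  have hfaD : f a ∈ D := hf.mapsTo haΩ
  rw [hfaζ] at hfaD
  exact (disjoint_frontier_iff_isOpen.mpr hDo).le_bot ⟨hζfr, hfaD⟩

lemma frontier_target_nonempty (Ω D : Set ℂ) (hΩo : IsOpen Ω) (hΩc : IsConnected Ω)
    (hDc : IsConnected D)
    (η : ℝ → ℝ) (hη : StrictMonoOn η (Set.Ici 0)) (hη0 : η 0 = 0)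
    (hηsurj : Set.SurjOn η (Set.Ici 0) (Set.Ici 0))
    (f : ℂ → ℂ) (hf : Set.BijOn f Ω D)
    (hqs : ∀ x₁ ∈ Ω, ∀ x₂ ∈ Ω, ∀ x₃ ∈ Ω, ∀ t : ℝ, 0 ≤ t →
      innerDiam Ω x₁ x₂ ≤ ENNReal.ofReal t * innerDiam Ω x₁ x₃ →
      innerDiam D (f x₁) (f x₂) ≤ ENNReal.ofReal (η t) * innerDiam D (f x₁) (f x₃))
    (hfrΩ : (frontier Ω).Nonempty) : (frontier D).Nonempty := by
  by_contra hfrD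
  rw [not_nonempty_iff_eq_empty] at hfrD
  have hDuniv : D = univ := by
    rcases frontier_eq_empty_iff.mp hfrD with h | h
    · exact absurd h hDc.nonempty.ne_empty
    · exact h
  subst hDuniv
  simp only [innerDiam_univ] at hqs
  -- setup: a ray to the nearest boundary point of Ω
  obtain ⟨x₀, hx₀⟩ := hΩc.nonempty
  set δ : ℝ := infDist x₀ (frontier Ω) with hδdef
  have hδ : 0 < δ := by
    rw [hδdef]
    refine (isClosed_frontier.notMem_iff_infDist_pos hfrΩ).mp ?_
    intro hmem
    exact (disjoint_frontier_iff_isOpen.mpr hΩo).le_bot ⟨hmem, hx₀⟩ |>.elim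
  obtain ⟨ζ, hζfr, hζd⟩ := isClosed_frontier.exists_infDist_eq_dist hfrΩ x₀
  set y : ℝ → ℂ := fun u => x₀ + u • (ζ - x₀) with hy
  have hy0 : y 0 = x₀ := by simp [hy]
  have hy1 : y 1 = ζ := by simp [hy]
  have hydist : ∀ u v : ℝ, dist (y u) (y v) = |u - v| * δ := by
    intro u v
    have : y u - y v = (u - v) • (ζ - x₀) := by simp only [hy]; module
    rw [dist_eq_norm, this, norm_smul, Real.norm_eq_abs]
    congr 1
    rw [norm_sub_rev, ← dist_eq_norm, ← hζd, hδdef]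
  have hyball : ∀ u ∈ Ico (0:ℝ) 1, y u ∈ ball x₀ δ := by
    intro u hu
    rw [mem_ball, ← hy0, hydist u 0, sub_zero, abs_of_nonneg hu.1]
    calc u * δ < 1 * δ := mul_lt_mul_of_pos_right hu.2 hδ
      _ = δ := one_mul _
  have hballΩ : ball x₀ δ ⊆ Ω := by
    rw [hδdef]; exact ball_infDist_frontier_subset hΩo hx₀
  have hyΩ : ∀ u ∈ Ico (0:ℝ) 1, y u ∈ Ω := fun u hu => hballΩ (hyball u hu)
  have hρ_le : ∀ u ∈ Ico (0:ℝ) 1, ∀ v ∈ Ico (0:ℝ) 1,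
      innerDiam Ω (y u) (y v) ≤ ENNReal.ofReal (|u - v| * δ) := by
    intro u hu v hv
    have hseg : segment ℝ (y u) (y v) ⊆ Ω :=
      ((convex_ball x₀ δ).segment_subset (hyball u hu) (hyball v hv)).trans hballΩ
    refine (innerDiam_le_edist_of_segment hseg).trans ?_
    rw [edist_dist, hydist]
  have hρ_ge : ∀ u v : ℝ, ENNReal.ofReal (|u - v| * δ) ≤ innerDiam Ω (y u) (y v) := by
    intro u v
    have := edist_le_innerDiam Ω (y u) (y v)
    rwa [edist_dist, hydist] at this
  -- the sequence
  set c : ℕ → ℝ := fun n => 1 - 1 / (n + 1) with hc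
  have hc0 : ∀ n, 0 ≤ c n := by
    intro n
    have : 1 / ((n:ℝ) + 1) ≤ 1 := by
      rw [div_le_one (by positivity)]; linarith [Nat.cast_nonneg (α := ℝ) n]
    simp only [hc]; linarith
  have hc1 : ∀ n, c n < 1 := by
    intro n
    have : 0 < 1 / ((n:ℝ) + 1) := by positivity
    simp only [hc]; linarith
  have hcmem : ∀ n, c n ∈ Ico (0:ℝ) 1 := fun n => ⟨hc0 n, hc1 n⟩
  have hchalf : ∀ n, 1 ≤ n → (1:ℝ)/2 ≤ c n := by
    intro n hn
    have h1 : (1:ℝ) ≤ (n:ℝ) := Nat.one_le_cast.mpr hn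
    have : 1 / ((n:ℝ) + 1) ≤ 1 / 2 := by
      rw [div_le_div_iff₀ (by positivity) (by norm_num)]
      linarith
    simp only [hc]; linarith
  set x : ℕ → ℂ := fun n => y (c n) with hx
  have hxΩ : ∀ n, x n ∈ Ω := fun n => hyΩ _ (hcmem n)
  have hhalfmem : (1/2 : ℝ) ∈ Ico (0:ℝ) 1 := by norm_num
  have hxhΩ : y (1/2) ∈ Ω := hyΩ _ hhalfmem
  -- uniform bound M on edist (f x₀) (f (x n))
  set M : ℝ≥0∞ := ENNReal.ofReal (η 2) * edist (f x₀) (f (y (1/2))) with hM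
  have hMfin : M ≠ ⊤ := ENNReal.mul_ne_top ENNReal.ofReal_ne_top (edist_ne_top _ _)
  have hMbound : ∀ n, edist (f x₀) (f (x n)) ≤ M := by
    intro n
    have h1 : innerDiam Ω x₀ (x n) ≤ ENNReal.ofReal 2 * innerDiam Ω x₀ (y (1/2)) := by
      have ha : innerDiam Ω x₀ (x n) ≤ ENNReal.ofReal (|0 - c n| * δ) := by
        have := hρ_le 0 (by norm_num) (c n) (hcmem n)
        rwa [hy0] at this
      have hb : ENNReal.ofReal (|0 - (1/2:ℝ)| * δ) ≤ innerDiam Ω x₀ (y (1/2)) := by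
        have := hρ_ge 0 (1/2)
        rwa [hy0] at this
      refine ha.trans ?_
      have hcc : |0 - c n| * δ ≤ 2 * (|0 - (1/2:ℝ)| * δ) := by
        rw [zero_sub, abs_neg, abs_of_nonneg (hc0 n)]
        have : |0 - (1/2:ℝ)| = 1/2 := by norm_num
        rw [this]
        have h2 : c n * δ ≤ 1 * δ := mul_le_mul_of_nonneg_right (hc1 n).le hδ.le
        have h3 : (2:ℝ) * (1/2 * δ) = 1 * δ := by ring
        rw [h3]
        exact h2
      calc ENNReal.ofReal (|0 - c n| * δ) ≤ ENNReal.ofReal (2 * (|0 - (1/2:ℝ)| * δ)) :=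
            ENNReal.ofReal_le_ofReal hcc
        _ = ENNReal.ofReal 2 * ENNReal.ofReal (|0 - (1/2:ℝ)| * δ) :=
            ENNReal.ofReal_mul (by norm_num)
        _ ≤ ENNReal.ofReal 2 * innerDiam Ω x₀ (y (1/2)) := mul_le_mul_right hb _
    have := hqs x₀ hx₀ (x n) (hxΩ n) (y (1/2)) hxhΩ 2 (by norm_num) h1
    exact this
  -- Cauchy sequence
  have hcauchy : CauchySeq (fun n => f (x n)) := by
    rw [EMetric.cauchySeq_iff]
    intro ε hε
    obtain ⟨e, _, he0, heε⟩ := ENNReal.lt_iff_exists_real_btwn.mp hε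
    have he : 0 < e := by
      by_contra h
      push_neg at h
      rw [ENNReal.ofReal_eq_zero.mpr h] at he0
      exact (lt_irrefl _ he0).elim
    set Mr : ℝ := M.toReal + 1 with hMr
    have hMr0 : 0 < Mr := by positivity
    have hMle : M ≤ ENNReal.ofReal Mr :=
      le_trans (le_of_eq (ENNReal.ofReal_toReal hMfin).symm)
        (ENNReal.ofReal_le_ofReal (by rw [hMr]; linarith))
    obtain ⟨τ, hτ0, hτ⟩ := exists_eta_small hη hη0 hηsurj (ε := e / (2 * Mr)) (by positivity)
    obtain ⟨N₀, hN₀⟩ := exists_nat_one_div_lt (ε := τ/2) (by positivity)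
    refine ⟨max N₀ 1, fun m hm n hn => ?_⟩
    have hm1 : 1 ≤ m := le_trans (le_max_right _ _) hm
    have hm0 : N₀ ≤ m := le_trans (le_max_left _ _) hm
    have hn0 : N₀ ≤ n := le_trans (le_max_left _ _) hn
    -- |c m - c n| < τ/2
    have hsmall : ∀ k : ℕ, N₀ ≤ k → 0 < 1 / ((k:ℝ) + 1) ∧ 1 / ((k:ℝ) + 1) < τ/2 := by
      intro k hk
      constructor
      · positivity
      · refine lt_of_le_of_lt ?_ hN₀
        rw [div_le_div_iff₀ (by positivity) (by positivity)]
        have : ((N₀:ℝ)) ≤ (k:ℝ) := Nat.cast_le.mpr hk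
        linarith
    have hΔ : |c m - c n| < τ/2 := by
      obtain ⟨h1, h2⟩ := hsmall m hm0
      obtain ⟨h3, h4⟩ := hsmall n hn0
      have hcm : c m - c n = 1/((n:ℝ)+1) - 1/((m:ℝ)+1) := by simp only [hc]; ring
      rw [abs_sub_lt_iff]
      constructor
      · rw [hcm] at *; linarith
      · have hcm2 : c n - c m = 1/((m:ℝ)+1) - 1/((n:ℝ)+1) := by simp only [hc]; ring
        rw [hcm2]; linarith
    -- innerDiam hypothesis for qs
    have h1 : innerDiam Ω (x m) (x n) ≤ ENNReal.ofReal τ * innerDiam Ω (x m) x₀ := by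
      have ha : innerDiam Ω (x m) (x n) ≤ ENNReal.ofReal (|c m - c n| * δ) :=
        hρ_le (c m) (hcmem m) (c n) (hcmem n)
      have hb : ENNReal.ofReal (|c m - 0| * δ) ≤ innerDiam Ω (x m) x₀ := by
        have := hρ_ge (c m) 0
        rwa [hy0] at this
      refine ha.trans ?_
      have hcc : |c m - c n| * δ ≤ τ * (|c m - 0| * δ) := by
        rw [sub_zero, abs_of_nonneg (hc0 m)]
        have h5 : (1:ℝ)/2 ≤ c m := hchalf m hm1
        have h6 : |c m - c n| * δ ≤ (τ/2) * δ :=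
          mul_le_mul_of_nonneg_right hΔ.le hδ.le
        have h7 : (τ/2) * δ ≤ τ * (c m * δ) := by
          have h8 : τ * ((1:ℝ)/2) * δ ≤ τ * c m * δ :=
            mul_le_mul_of_nonneg_right (mul_le_mul_of_nonneg_left h5 hτ0.le) hδ.le
          have h9 : τ * ((1:ℝ)/2) * δ = (τ/2) * δ := by ring
          have h10 : τ * c m * δ = τ * (c m * δ) := by ring
          rw [h9, h10] at h8
          exact h8
        exact h6.trans h7
      calc ENNReal.ofReal (|c m - c n| * δ) ≤ ENNReal.ofReal (τ * (|c m - 0| * δ)) :=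
            ENNReal.ofReal_le_ofReal hcc
        _ = ENNReal.ofReal τ * ENNReal.ofReal (|c m - 0| * δ) :=
            ENNReal.ofReal_mul hτ0.le
        _ ≤ ENNReal.ofReal τ * innerDiam Ω (x m) x₀ := mul_le_mul_right hb _
    have h2 := hqs (x m) (hxΩ m) (x n) (hxΩ n) x₀ hx₀ τ hτ0.le h1
    refine lt_of_le_of_lt (h2.trans ?_) heε
    have h3 : edist (f (x m)) (f x₀) ≤ M := by
      rw [edist_comm]; exact hMbound m
    calc ENNReal.ofReal (η τ) * edist (f (x m)) (f x₀)
        ≤ ENNReal.ofReal (e / (2*Mr)) * ENNReal.ofReal Mr := by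
          exact mul_le_mul (ENNReal.ofReal_le_ofReal hτ) (h3.trans hMle) (by positivity) (by positivity)
      _ = ENNReal.ofReal (e / (2*Mr) * Mr) := (ENNReal.ofReal_mul (by positivity)).symm
      _ ≤ ENNReal.ofReal e := by
          refine ENNReal.ofReal_le_ofReal ?_
          rw [div_mul_eq_mul_div, mul_comm]
          rw [div_le_iff₀ (by positivity)]
          nlinarith
  obtain ⟨wlim, hwlim⟩ := cauchySeq_tendsto_of_complete hcauchy
  obtain ⟨p, hpΩ, hfp⟩ := hf.surjOn (mem_univ wlim)
  -- a second point q ∈ Ω distinct from p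
  obtain ⟨r, hr, hballp⟩ := Metric.isOpen_iff.mp hΩo p hpΩ
  set q : ℂ := p + (r/2 : ℝ) with hq
  have hqp : dist q p = r / 2 := by
    simp [hq, dist_eq_norm]
    linarith
  have hqΩ : q ∈ Ω := hballp (by rw [mem_ball, hqp]; linarith)
  have hqne : q ≠ p := by
    intro h
    rw [h] at hqp
    simp at hqp
    linarith
  have he₀ : 0 < dist (f p) (f q) := by
    rw [dist_pos]
    intro h
    exact hqne (hf.injOn hqΩ hpΩ h.symm)
  set e₀ : ℝ := dist (f p) (f q) with he₀def
  set KΩ : ℝ≥0∞ := innerDiam Ω p q with hKΩ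
  have hK0 : KΩ ≠ 0 := by
    intro h
    have := edist_le_innerDiam Ω p q
    rw [← hKΩ, h, le_zero_iff, edist_eq_zero] at this
    exact hqne this.symm
  have hKfin : KΩ ≠ ⊤ := (innerDiam_lt_top hΩo hΩc hpΩ hqΩ).ne
  set Kr : ℝ := KΩ.toReal with hKr
  have hKr0 : 0 < Kr := ENNReal.toReal_pos hK0 hKfin
  -- x n → p
  have htendp : Tendsto x atTop (𝓝 p) := by
    rw [Metric.tendsto_atTop]
    intro ε' hε'
    set t : ℝ := ε' / (2 * Kr) with ht
    have ht0 : 0 < t := by positivity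
    set τ' : ℝ := 1 / t with hτ'
    have hτ'0 : 0 < τ' := by positivity
    have hη' : 0 ≤ η τ' := eta_nonneg hη hη0 hτ'0.le
    rw [EMetric.tendsto_atTop] at hwlim
    obtain ⟨N, hN⟩ := hwlim (ENNReal.ofReal (e₀ / (η τ' + 1))) (by
      refine ENNReal.ofReal_pos.mpr ?_
      positivity)
    refine ⟨N, fun n hn => ?_⟩
    have hclose := hN n hn
    have hkey : innerDiam Ω p (x n) < ENNReal.ofReal t * ENNReal.ofReal Kr := by
      rcases le_or_gt (innerDiam Ω p q) (ENNReal.ofReal τ' * innerDiam Ω p (x n)) with hle | hlt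
      · exfalso
        have h2 := hqs p hpΩ q hqΩ (x n) (hxΩ n) τ' hτ'0.le hle
        have h3 : edist (f p) (f (x n)) ≤ ENNReal.ofReal (e₀ / (η τ' + 1)) := by
          rw [hfp] at *
          rw [edist_comm]
          exact hclose.le
        have h4 : ENNReal.ofReal e₀ ≤ ENNReal.ofReal (η τ' * (e₀ / (η τ' + 1))) := by
          calc ENNReal.ofReal e₀ = edist (f p) (f q) := by rw [edist_dist]
            _ ≤ ENNReal.ofReal (η τ') * edist (f p) (f (x n)) := h2
            _ ≤ ENNReal.ofReal (η τ') * ENNReal.ofReal (e₀ / (η τ' + 1)) :=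
                mul_le_mul_right h3 _
            _ = ENNReal.ofReal (η τ' * (e₀ / (η τ' + 1))) :=
                (ENNReal.ofReal_mul hη').symm
        rw [ENNReal.ofReal_le_ofReal_iff (by positivity)] at h4
        have h5 : η τ' * (e₀ / (η τ' + 1)) < e₀ := by
          rw [mul_div_assoc', div_lt_iff₀ (by positivity)]
          nlinarith
        linarith
      · have h6 : ENNReal.ofReal τ' * innerDiam Ω p (x n) < ENNReal.ofReal Kr := by
          refine lt_of_lt_of_le hlt ?_
          rw [hKΩ] at *
          rw [← ENNReal.ofReal_toReal hKfin]
        have h7 : innerDiam Ω p (x n) =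
            ENNReal.ofReal t * (ENNReal.ofReal τ' * innerDiam Ω p (x n)) := by
          rw [← mul_assoc, ← ENNReal.ofReal_mul ht0.le]
          have : t * τ' = 1 := by
            rw [hτ']
            field_simp
          rw [this, ENNReal.ofReal_one, one_mul]
        rw [h7]
        exact ENNReal.mul_lt_mul_right (ENNReal.ofReal_pos.mpr ht0).ne' ENNReal.ofReal_ne_top h6
    have h8 : edist p (x n) < ENNReal.ofReal (ε'/2) := by
      refine lt_of_le_of_lt (edist_le_innerDiam Ω p (x n)) ?_
      rw [← ENNReal.ofReal_mul ht0.le] at hkey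
      have : t * Kr = ε' / 2 := by
        rw [ht]
        field_simp
      rwa [this] at hkey
    rw [edist_dist] at h8
    rw [dist_comm]
    have := (ENNReal.ofReal_lt_ofReal_iff (by positivity)).mp h8
    linarith
  -- but also x n → ζ
  have hctend : Tendsto c atTop (𝓝 1) := by
    have h0 : Tendsto (fun n : ℕ => 1 / ((n:ℝ) + 1)) atTop (𝓝 0) :=
      tendsto_one_div_add_atTop_nhds_zero_nat
    have := h0.const_sub (1:ℝ)
    simpa [hc] using this
  have hxtend : Tendsto x atTop (𝓝 ζ) := by
    have h1 : Tendsto (fun n => (c n) • (ζ - x₀)) atTop (𝓝 ((1:ℝ) • (ζ - x₀))) :=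
      hctend.smul_const _
    have h2 := h1.const_add x₀
    rw [one_smul] at h2
    have h3 : x₀ + (ζ - x₀) = ζ := by abel
    rw [h3] at h2
    exact h2
  have hpζ : p = ζ := tendsto_nhds_unique htendp hxtend
  rw [hpζ] at hpΩ
  exact (disjoint_frontier_iff_isOpen.mpr hΩo).le_bot ⟨hζfr, hpΩ⟩

/-- Quasisymmetric invariance of inner-diameter-uniform curves: if
`f : (Ω,ρ_Ω) → (D,ρ_D)` is `η`-quasisymmetric, the image of an `(A,ρ_Ω)`-uniform curve is a
`(2η(2A), ρ_D)`-uniform curve. -/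
theorem statement_6 (Ω D : Set ℂ) (hΩo : IsOpen Ω) (hΩc : IsConnected Ω)
    (hDo : IsOpen D) (hDc : IsConnected D)
    (η : ℝ → ℝ) (hη : StrictMonoOn η (Set.Ici 0)) (hη0 : η 0 = 0)
    (hηsurj : Set.SurjOn η (Set.Ici 0) (Set.Ici 0))
    (f : ℂ → ℂ) (hf : Set.BijOn f Ω D)
    (hqs : ∀ x₁ ∈ Ω, ∀ x₂ ∈ Ω, ∀ x₃ ∈ Ω, ∀ t : ℝ, 0 ≤ t →
      innerDiam Ω x₁ x₂ ≤ ENNReal.ofReal t * innerDiam Ω x₁ x₃ →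
      innerDiam D (f x₁) (f x₂) ≤ ENNReal.ofReal (η t) * innerDiam D (f x₁) (f x₃))
    (A : ℝ) (hA : 1 ≤ A) (γ : ℝ → ℂ) (hγ : IsInnerDiamUniformCurve A Ω γ) :
    IsInnerDiamUniformCurve (2 * η (2 * A)) D (f ∘ γ) := by
  obtain ⟨hγc, hγm, hγ3, hγ4⟩ := hγ
  have hA0 : (0:ℝ) < A := lt_of_lt_of_le one_pos hA
  have h2A : (0:ℝ) ≤ 2 * A := by linarith
  have hη2A : 0 ≤ η (2 * A) := eta_nonneg hη hη0 h2A
  have hcont : ContinuousOn f Ω :=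
    qs_continuousOn Ω D hΩo hDo hDc η hη hη0 hηsurj f hf hqs
  have hγmem : ∀ s ∈ Icc (0:ℝ) 1, γ s ∈ Ω := fun s hs => hγm hs
  have h01 : (0:ℝ) ∈ Icc (0:ℝ) 1 := ⟨le_refl _, zero_le_one⟩
  have h11 : (1:ℝ) ∈ Icc (0:ℝ) 1 := ⟨zero_le_one, le_refl _⟩
  refine ⟨hcont.comp hγc hγm, hf.mapsTo.comp hγm, ?_, ?_⟩
  · -- global diameter bound
    by_cases hz : innerDiam Ω (γ 0) (γ 1) = 0
    · -- degenerate: the curve collapses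
      have hsub : (γ '' Icc 0 1).Subsingleton := by
        rw [← EMetric.diam_eq_zero_iff]
        refine le_antisymm ?_ (by positivity)
        calc EMetric.diam (γ '' Icc 0 1) ≤ ENNReal.ofReal A * innerDiam Ω (γ 0) (γ 1) := hγ3
          _ = 0 := by rw [hz, mul_zero]
      have : ((f ∘ γ) '' Icc 0 1).Subsingleton := by
        rw [Set.image_comp]
        exact hsub.image f
      rw [← EMetric.diam_eq_zero_iff] at this
      rw [show EMetric.diam ((f ∘ γ) '' Icc 0 1) = 0 from this]
      positivity
    · have key : ∀ s ∈ Icc (0:ℝ) 1, innerDiam D (f (γ 0)) (f (γ s))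
          ≤ ENNReal.ofReal (η (2*A)) * innerDiam D (f (γ 0)) (f (γ 1)) := by
        intro s hs
        have h1 : innerDiam Ω (γ 0) (γ s) ≤ ENNReal.ofReal (2*A) * innerDiam Ω (γ 0) (γ 1) := by
          calc innerDiam Ω (γ 0) (γ s) ≤ EMetric.diam (γ '' Icc 0 s) :=
                innerDiam_le_curve hs.1 (hγc.mono (Icc_subset_Icc (le_refl _) hs.2))
                  (fun u hu => hγm (Icc_subset_Icc (le_refl _) hs.2 hu))
            _ ≤ EMetric.diam (γ '' Icc 0 1) :=
                EMetric.diam_mono (image_mono (Icc_subset_Icc (le_refl _) hs.2))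
            _ ≤ ENNReal.ofReal A * innerDiam Ω (γ 0) (γ 1) := hγ3
            _ ≤ ENNReal.ofReal (2*A) * innerDiam Ω (γ 0) (γ 1) :=
                mul_le_mul_left (ENNReal.ofReal_le_ofReal (by linarith)) _
        exact hqs (γ 0) (hγmem 0 h01) (γ s) (hγmem s hs) (γ 1) (hγmem 1 h11) (2*A) h2A h1
      refine EMetric.diam_le ?_
      rintro _ ⟨s, hs, rfl⟩ _ ⟨u, hu, rfl⟩
      simp only [Function.comp_apply]
      have hE : ∀ v ∈ Icc (0:ℝ) 1, edist (f (γ v)) (f (γ 0))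
          ≤ ENNReal.ofReal (η (2*A)) * innerDiam D (f (γ 0)) (f (γ 1)) := by
        intro v hv
        rw [edist_comm]
        exact (edist_le_innerDiam D _ _).trans (key v hv)
      calc edist (f (γ s)) (f (γ u))
          ≤ edist (f (γ s)) (f (γ 0)) + edist (f (γ 0)) (f (γ u)) := edist_triangle _ _ _
        _ ≤ ENNReal.ofReal (η (2*A)) * innerDiam D (f (γ 0)) (f (γ 1))
            + ENNReal.ofReal (η (2*A)) * innerDiam D (f (γ 0)) (f (γ 1)) := by
            refine add_le_add (hE s hs) ?_
            rw [edist_comm]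
            exact hE u hu
        _ = (2 : ℝ≥0∞) * (ENNReal.ofReal (η (2*A)) * innerDiam D (f (γ 0)) (f (γ 1))) :=
            (two_mul _).symm
        _ = ENNReal.ofReal (2 * η (2*A)) * innerDiam D ((f ∘ γ) 0) ((f ∘ γ) 1) := by
            have h2 : ENNReal.ofReal (2:ℝ) = 2 := by norm_num
            simp only [Function.comp_apply]
            rw [ENNReal.ofReal_mul (by norm_num : (0:ℝ) ≤ 2), h2, ← mul_assoc]
  · -- local condition
    intro t ht
    set dΩ : ℝ := infDist (γ t) (frontier Ω) with hdΩ
    set dD : ℝ := infDist ((f ∘ γ) t) (frontier D) with hdD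
    have hγtΩ : γ t ∈ Ω := hγmem t ht
    have hdΩ0 : 0 ≤ dΩ := infDist_nonneg
    -- a helper to finish when one of the γ-halves is a single point
    have hdeg : ∀ a b : ℝ, EMetric.diam (γ '' Icc a b) = 0 →
        EMetric.diam ((f ∘ γ) '' Icc a b) = 0 := by
      intro a b h
      refine EMetric.diam_eq_zero_iff.mpr ?_; replace h := EMetric.diam_eq_zero_iff.mp h
      rw [Set.image_comp]
      exact h.image f
    by_cases hdΩz : dΩ ≤ 0
    · -- boundary distance zero : one of the halves of γ is constant
      have h0 : ENNReal.ofReal (A * dΩ) = 0 := by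
        rw [ENNReal.ofReal_eq_zero]
        nlinarith
      have hmin := hγ4 t ht
      rw [h0, le_zero_iff] at hmin
      rcases min_eq_iff.mp hmin with ⟨h, -⟩ | ⟨h, -⟩
      · refine min_le_of_left_le ?_
        rw [hdeg 0 t h]
        positivity
      · refine min_le_of_right_le ?_
        rw [hdeg t 1 h]
        positivity
    · push_neg at hdΩz
      have hfrΩ : (frontier Ω).Nonempty := by
        by_contra h
        rw [not_nonempty_iff_eq_empty] at h
        rw [hdΩ, h, infDist_empty] at hdΩz
        exact lt_irrefl _ hdΩz
      have hfrD : (frontier D).Nonempty :=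
        frontier_target_nonempty Ω D hΩo hΩc hDc η hη hη0 hηsurj f hf hqs hfrΩ
      have hball : closedBall (γ t) (dΩ/2) ⊆ Ω := by
        refine (closedBall_subset_ball (half_lt_self hdΩz)).trans ?_
        rw [hdΩ]
        exact ball_infDist_frontier_subset hΩo hγtΩ
      obtain ⟨w, hwΩ, hwfar, hwnear⟩ :=
        exists_far_point hΩo hDo hf hcont hγtΩ hfrD (half_pos hdΩz) hball
      have hdD0 : 0 ≤ dD := infDist_nonneg
      -- key estimate for points on the relevant half
      have hkey : ∀ a b : ℝ, 0 ≤ a → b ≤ 1 → t ∈ Icc a b →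
          EMetric.diam (γ '' Icc a b) ≤ ENNReal.ofReal (A * dΩ) →
          EMetric.diam ((f ∘ γ) '' Icc a b) ≤ ENNReal.ofReal (2 * η (2*A) * dD) := by
        intro a b ha0 hb1 htab hdiam
        have hsub1 : Icc a b ⊆ Icc (0:ℝ) 1 := Icc_subset_Icc ha0 hb1
        have hptbound : ∀ s ∈ Icc a b, innerDiam D (f (γ t)) (f (γ s))
            ≤ ENNReal.ofReal (η (2*A) * dD) := by
          intro s hs
          have hρ : innerDiam Ω (γ t) (γ s) ≤ ENNReal.ofReal (A * dΩ) := by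
            rcases le_total s t with hst | hts
            · calc innerDiam Ω (γ t) (γ s) = innerDiam Ω (γ s) (γ t) := innerDiam_comm _ _ _
                _ ≤ EMetric.diam (γ '' Icc s t) :=
                    innerDiam_le_curve hst
                      (hγc.mono ((Icc_subset_Icc hs.1 htab.2).trans hsub1))
                      (fun u hu => hγm ((Icc_subset_Icc hs.1 htab.2).trans hsub1 hu))
                _ ≤ EMetric.diam (γ '' Icc a b) :=
                    EMetric.diam_mono (image_mono (Icc_subset_Icc hs.1 htab.2))
                _ ≤ ENNReal.ofReal (A * dΩ) := hdiam
            · calc innerDiam Ω (γ t) (γ s) ≤ EMetric.diam (γ '' Icc t s) :=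
                    innerDiam_le_curve hts
                      (hγc.mono ((Icc_subset_Icc htab.1 hs.2).trans hsub1))
                      (fun u hu => hγm ((Icc_subset_Icc htab.1 hs.2).trans hsub1 hu))
                _ ≤ EMetric.diam (γ '' Icc a b) :=
                    EMetric.diam_mono (image_mono (Icc_subset_Icc htab.1 hs.2))
                _ ≤ ENNReal.ofReal (A * dΩ) := hdiam
          have hρ2 : innerDiam Ω (γ t) (γ s) ≤ ENNReal.ofReal (2*A) * innerDiam Ω (γ t) w := by
            refine hρ.trans ?_
            have heq : A * dΩ = (2*A) * (dΩ/2) := by ring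
            rw [heq, ENNReal.ofReal_mul h2A]
            exact mul_le_mul_right hwfar _
          have h3 := hqs (γ t) hγtΩ (γ s) (hγmem s (hsub1 hs)) w hwΩ (2*A) h2A hρ2
          refine h3.trans ?_
          rw [ENNReal.ofReal_mul hη2A]
          exact mul_le_mul_right hwnear _
        refine EMetric.diam_le ?_
        rintro _ ⟨s, hs, rfl⟩ _ ⟨u, hu, rfl⟩
        simp only [Function.comp_apply]
        have hEs : edist (f (γ s)) (f (γ t)) ≤ ENNReal.ofReal (η (2*A) * dD) := by
          rw [edist_comm]
          exact (edist_le_innerDiam D _ _).trans (hptbound s hs)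
        have hEu : edist (f (γ t)) (f (γ u)) ≤ ENNReal.ofReal (η (2*A) * dD) :=
          (edist_le_innerDiam D _ _).trans (hptbound u hu)
        calc edist (f (γ s)) (f (γ u))
            ≤ edist (f (γ s)) (f (γ t)) + edist (f (γ t)) (f (γ u)) := edist_triangle _ _ _
          _ ≤ ENNReal.ofReal (η (2*A) * dD) + ENNReal.ofReal (η (2*A) * dD) :=
              add_le_add hEs hEu
          _ = ENNReal.ofReal (η (2*A) * dD + η (2*A) * dD) :=
              (ENNReal.ofReal_add (by positivity) (by positivity)).symm
          _ = ENNReal.ofReal (2 * η (2*A) * dD) := by ring_nf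
      have hmin := hγ4 t ht
      rcases min_le_iff.mp hmin with h | h
      · exact min_le_of_left_le (hkey 0 t (le_refl 0) ht.2 ⟨ht.1, le_refl t⟩ h)
      · exact min_le_of_right_le (hkey t 1 ht.1 (le_refl 1) ⟨le_refl t, ht.2⟩ h)
end
end

section
/- Let Ω_n ⊂ Ĉ be domains with ∞ ∈ Ω_n, set E_n = Ĉ \ Ω_n, and suppose the compact sets E_n ⊂ ℂ converge in the Hausdorff sense (with respect to the Euclidean metric) to a compact set E ⊂ ℂ. Let Ω be the connected component of Ĉ \ E containing ∞. Then Ω is the ∞-kernel of the sequence (Ω_n), and hence (Ω_n) converges to Ω in the Carathéodory sense with base at ∞. -/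
open Set Metric Filter Topology
open scoped ENNReal

noncomputable section

/-- The `∞`-kernel of a sequence of domains in the Riemann sphere: the union of all domains `U`
containing `∞` each of whose compact subsets lies in `Ωs n` for all sufficiently large `n`. -/
def kernelAtInfty (Ωs : ℕ → Set (OnePoint ℂ)) : Set (OnePoint ℂ) :=
  ⋃₀ {U : Set (OnePoint ℂ) | IsOpen U ∧ IsConnected U ∧ OnePoint.infty ∈ U ∧
    ∀ K : Set (OnePoint ℂ), K ⊆ U → IsCompact K → ∀ᶠ n in Filter.atTop, K ⊆ Ωs n}


lemma isConnected_norm_gt {r : ℝ} (hr : 0 ≤ r) : IsConnected {z : ℂ | r < ‖z‖} := by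
  have hs : IsConnected (Metric.sphere (0:ℂ) 1) :=
    isConnected_sphere (by rw [Complex.rank_real_complex]; norm_num) 0 zero_le_one
  have hprod : IsConnected ((Metric.sphere (0:ℂ) 1) ×ˢ (Ioi r)) := hs.prod isConnected_Ioi
  have himg : IsConnected ((fun p : ℂ × ℝ => p.2 • p.1) '' ((Metric.sphere (0:ℂ) 1) ×ˢ (Ioi r))) :=
    hprod.image _ (continuous_snd.smul continuous_fst).continuousOn
  convert himg using 1
  ext z
  simp only [mem_image, mem_prod, mem_setOf_eq, mem_sphere_iff_norm, sub_zero, mem_Ioi]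
  constructor
  · intro hz
    have hz0 : z ≠ 0 := by intro h; simp [h] at hz; linarith
    refine ⟨(‖z‖⁻¹ • z, ‖z‖), ⟨norm_smul_inv_norm hz0, hz⟩, ?_⟩
    rw [smul_smul, mul_inv_cancel₀ (norm_ne_zero_iff.mpr hz0), one_smul]
  · rintro ⟨⟨u, t⟩, ⟨hu, ht⟩, rfl⟩
    have : (0:ℝ) < t := lt_of_le_of_lt hr ht
    simpa [norm_smul, hu, abs_of_pos this] using ht

instance : LocallyConnectedSpace (OnePoint ℂ) := by
  rw [locallyConnectedSpace_iff_connected_subsets]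
  intro x U hU
  cases x with
  | infty =>
    obtain ⟨s, ⟨hscl, hsc⟩, hsU⟩ := (OnePoint.hasBasis_nhds_infty.mem_iff).mp hU
    obtain ⟨R, hR⟩ := hsc.isBounded.subset_closedBall 0
    set r := max R 0 with hr
    have hr0 : 0 ≤ r := le_max_right _ _
    have hsub : s ⊆ closedBall 0 r := hR.trans (closedBall_subset_closedBall (le_max_left _ _))
    set S := {z : ℂ | r < ‖z‖} with hS
    refine ⟨(↑) '' S ∪ {OnePoint.infty}, ?_, ?_, ?_⟩
    · refine mem_of_superset (OnePoint.hasBasis_nhds_infty.mem_of_mem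
        (i := closedBall 0 r) ⟨isClosed_closedBall, isCompact_closedBall _ _⟩) ?_
      apply union_subset_union_left
      apply image_mono
      intro z hz
      simp only [mem_compl_iff, mem_closedBall, dist_zero_right, not_le] at hz
      exact hz
    · -- preconnected
      have hSconn := isConnected_norm_gt hr0
      have himg : IsPreconnected ((↑) '' S : Set (OnePoint ℂ)) :=
        (hSconn.image _ OnePoint.continuous_coe.continuousOn).isPreconnected
      refine himg.subset_closure subset_union_left ?_
      rintro x (hx | hx)
      · exact subset_closure hx
      · rw [mem_singleton_iff] at hx; subst hx
        rw [mem_closure_iff_nhds]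
        intro t ht
        obtain ⟨s', ⟨hscl', hsc'⟩, hs't⟩ := (OnePoint.hasBasis_nhds_infty.mem_iff).mp ht
        obtain ⟨R', hR'⟩ := hsc'.isBounded.subset_closedBall 0
        obtain ⟨z, hz⟩ : ∃ z : ℂ, max r R' < ‖z‖ := by
          obtain ⟨z, hz⟩ := NormedSpace.exists_lt_norm ℝ ℂ (max r R')
          exact ⟨z, hz⟩
        refine ⟨↑z, hs't ?_, mem_image_of_mem _ (lt_of_le_of_lt (le_max_left _ _) hz)⟩
        left
        refine mem_image_of_mem _ fun hzs => ?_
        have := hR' hzs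
        simp only [mem_closedBall, dist_zero_right] at this
        exact absurd (lt_of_le_of_lt (le_max_right r R') hz) (not_lt.mpr this)
    · -- subset of U
      refine (union_subset_union_left _ (image_mono ?_)).trans hsU
      intro z hz hzs
      have := hsub hzs
      simp only [mem_closedBall, dist_zero_right] at this
      exact absurd hz (not_lt.mpr (by simpa using this))
  | coe z =>
    have hU' : (↑) ⁻¹' U ∈ 𝓝 z := OnePoint.continuous_coe.continuousAt.preimage_mem_nhds hU
    obtain ⟨V, hVmem, hVconn, hVsub⟩ :=
      locallyConnectedSpace_iff_connected_subsets.mp inferInstance z _ hU'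
    refine ⟨(↑) '' V, ?_, hVconn.image _ OnePoint.continuous_coe.continuousOn, ?_⟩
    · rw [OnePoint.nhds_coe_eq]; exact image_mem_map hVmem
    · exact (image_mono hVsub).trans (image_preimage_subset _ _)


-- core: kernel = Ω
lemma kernel_core (Ωs : ℕ → Set (OnePoint ℂ))
    (hdom : ∀ n, IsOpen (Ωs n) ∧ IsConnected (Ωs n) ∧ OnePoint.infty ∈ Ωs n)
    (E : Set ℂ) (hE : IsCompact E)
    (hconv : Tendsto
      (fun n => EMetric.hausdorffEdist {z : ℂ | (z : OnePoint ℂ) ∉ Ωs n} E) atTop (nhds 0))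
    (Ω : Set (OnePoint ℂ))
    (hΩ : Ω = connectedComponentIn ((fun z : ℂ => (z : OnePoint ℂ)) '' E)ᶜ OnePoint.infty) :
    kernelAtInfty Ωs = Ω := by
  rw [kernelAtInfty]
  set cE : Set (OnePoint ℂ) := (fun z : ℂ => (z : OnePoint ℂ)) '' E with hcE
  have hcEcomp : IsCompact cE := hE.image OnePoint.continuous_coe
  have hopen : IsOpen cEᶜ := hcEcomp.isClosed.isOpen_compl
  have hinf : OnePoint.infty ∈ cEᶜ := OnePoint.infty_notMem_image_coe
  -- key eventual claim
  have core : ∀ K : Set (OnePoint ℂ), IsCompact K → Disjoint K cE →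
      ∀ᶠ n in atTop, K ⊆ Ωs n := by
    intro K hK hdisj
    obtain ⟨R₀, hR₀⟩ := hE.isBounded.subset_closedBall 0
    set R := max R₀ 0 with hR
    have hER : E ⊆ closedBall 0 R := hR₀.trans (closedBall_subset_closedBall (le_max_left _ _))
    set C : Set ℂ := ((fun z : ℂ => (z : OnePoint ℂ)) ⁻¹' K) ∩ closedBall 0 (R + 1) with hC
    have hCcomp : IsCompact C :=
      (isCompact_closedBall 0 (R + 1)).inter_left (hK.isClosed.preimage OnePoint.continuous_coe)
    have hCE : ∀ z ∈ C, z ∉ E := by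
      intro z hz hzE
      exact absurd (mem_image_of_mem _ hzE) (fun h => (disjoint_left.mp hdisj hz.1 h))
    obtain ⟨δ, hδpos, hδ1, hδsep⟩ : ∃ δ : ℝ, 0 < δ ∧ δ ≤ 1 ∧
        ∀ z ∈ C, ∀ w ∈ E, δ ≤ dist z w := by
      rcases C.eq_empty_or_nonempty with hCe | hCne
      · exact ⟨1, one_pos, le_refl _, by simp [hCe]⟩
      rcases E.eq_empty_or_nonempty with hEe | hEne
      · exact ⟨1, one_pos, le_refl _, by simp [hEe]⟩
      obtain ⟨z₀, hz₀C, hmin⟩ := hCcomp.exists_isMinOn hCne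
        ((continuous_infDist_pt E).continuousOn)
      have hpos : 0 < infDist z₀ E :=
        (hE.isClosed.notMem_iff_infDist_pos hEne).mp (hCE z₀ hz₀C)
      refine ⟨min (infDist z₀ E) 1, lt_min hpos one_pos, min_le_right _ _, ?_⟩
      intro z hz w hw
      calc min (infDist z₀ E) 1 ≤ infDist z₀ E := min_le_left _ _
        _ ≤ infDist z E := hmin hz
        _ ≤ dist z w := infDist_le_dist_of_mem hw
    have hev : ∀ᶠ n in atTop,
        EMetric.hausdorffEdist {z : ℂ | (z : OnePoint ℂ) ∉ Ωs n} E < ENNReal.ofReal δ :=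
      hconv.eventually_lt_const (by simpa using ENNReal.ofReal_pos.mpr hδpos)
    filter_upwards [hev] with n hn
    intro x hx
    cases x with
    | infty => exact (hdom n).2.2
    | coe z =>
      by_contra hz
      have hzE : z ∈ {z : ℂ | (z : OnePoint ℂ) ∉ Ωs n} := hz
      have h1 : EMetric.infEdist z E < ENNReal.ofReal δ :=
        lt_of_le_of_lt (EMetric.infEdist_le_hausdorffEdist_of_mem hzE) hn
      obtain ⟨w, hwE, hw⟩ := EMetric.infEdist_lt_iff.mp h1
      have hdzw : dist z w < δ := by
        rw [edist_dist] at hw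
        exact (ENNReal.ofReal_lt_ofReal_iff hδpos).mp hw
      have hzC : z ∈ C := by
        refine ⟨hx, ?_⟩
        have hwR : ‖w‖ ≤ R := by simpa [dist_zero_right] using hER hwE
        have : dist z 0 ≤ dist z w + dist w 0 := dist_triangle _ _ _
        simp only [mem_closedBall]
        rw [dist_zero_right] at this ⊢
        rw [dist_zero_right] at this
        calc ‖z‖ ≤ dist z w + ‖w‖ := by simpa [dist_zero_right] using this
          _ ≤ 1 + R := add_le_add (le_of_lt (lt_of_lt_of_le hdzw hδ1)) hwR
          _ = R + 1 := add_comm _ _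
      exact absurd hdzw (not_lt.mpr (hδsep z hzC w hwE))
  apply Subset.antisymm
  · -- kernel ⊆ Ω
    apply sUnion_subset
    rintro U ⟨hUo, hUc, hUinf, hUK⟩
    have hUsub : U ⊆ cEᶜ := by
      intro x hxU
      simp only [mem_compl_iff]
      rintro ⟨z, hzE, rfl⟩
      -- z ∈ E with ↑z ∈ U : derive contradiction
      have hzU : ((fun z : ℂ => (z : OnePoint ℂ)) ⁻¹' U) ∈ 𝓝 z :=
        (hUo.preimage OnePoint.continuous_coe).mem_nhds hxU
      obtain ⟨r, hrpos, hball⟩ := Metric.nhds_basis_closedBall.mem_iff.mp hzU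
      set K : Set (OnePoint ℂ) := (fun z : ℂ => (z : OnePoint ℂ)) '' closedBall z r with hKdef
      have hKU : K ⊆ U := by
        rintro _ ⟨w, hw, rfl⟩; exact hball hw
      have hKc : IsCompact K := (isCompact_closedBall z r).image OnePoint.continuous_coe
      have hev1 := hUK K hKU hKc
      have hev2 : ∀ᶠ n in atTop,
          EMetric.hausdorffEdist {z : ℂ | (z : OnePoint ℂ) ∉ Ωs n} E < ENNReal.ofReal r :=
        hconv.eventually_lt_const (by simpa using ENNReal.ofReal_pos.mpr hrpos)
      obtain ⟨n, hn1, hn2⟩ := (hev1.and hev2).exists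
      have h1 : EMetric.infEdist z {z : ℂ | (z : OnePoint ℂ) ∉ Ωs n} < ENNReal.ofReal r := by
        calc EMetric.infEdist z {z : ℂ | (z : OnePoint ℂ) ∉ Ωs n}
            ≤ EMetric.hausdorffEdist E {z : ℂ | (z : OnePoint ℂ) ∉ Ωs n} :=
              EMetric.infEdist_le_hausdorffEdist_of_mem hzE
          _ = EMetric.hausdorffEdist {z : ℂ | (z : OnePoint ℂ) ∉ Ωs n} E :=
              EMetric.hausdorffEdist_comm
          _ < ENNReal.ofReal r := hn2
      obtain ⟨w, hwEn, hw⟩ := EMetric.infEdist_lt_iff.mp h1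
      have hdzw : dist z w < r := by
        rw [edist_dist] at hw
        exact (ENNReal.ofReal_lt_ofReal_iff hrpos).mp hw
      have hwK : (w : OnePoint ℂ) ∈ K :=
        mem_image_of_mem _ (by simpa [mem_closedBall, dist_comm] using hdzw.le)
      exact hwEn (hn1 hwK)
    rw [hΩ]
    exact hUc.isPreconnected.subset_connectedComponentIn hUinf hUsub
  · -- Ω ⊆ kernel
    have hΩopen : IsOpen Ω := by rw [hΩ]; exact hopen.connectedComponentIn
    have hΩconn : IsConnected Ω := by
      rw [hΩ]; exact (isConnected_connectedComponentIn_iff).mpr hinf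
    have hΩinf : OnePoint.infty ∈ Ω := by rw [hΩ]; exact mem_connectedComponentIn hinf
    have hΩsub : Ω ⊆ cEᶜ := by rw [hΩ]; exact connectedComponentIn_subset _ _
    refine subset_sUnion_of_mem ⟨hΩopen, hΩconn, hΩinf, fun K hKΩ hKc => ?_⟩
    exact core K hKc (disjoint_left.mpr fun x hxK hxE => (hKΩ.trans hΩsub) hxK hxE)

/-- Carathéodory vs Hausdorff convergence: if the complements `E_n ⊆ ℂ` of
domains `Ω_n ∋ ∞` converge in the Hausdorff sense to a compact set `E`, then the component of
`Ĉ \ E` containing `∞` is the `∞`-kernel of `(Ω_n)` and of every subsequence. -/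
theorem statement_7 (Ωs : ℕ → Set (OnePoint ℂ))
    (hdom : ∀ n, IsOpen (Ωs n) ∧ IsConnected (Ωs n) ∧ OnePoint.infty ∈ Ωs n)
    (E : Set ℂ) (hE : IsCompact E)
    (hconv : Tendsto
      (fun n => EMetric.hausdorffEdist {z : ℂ | (z : OnePoint ℂ) ∉ Ωs n} E) atTop (nhds 0))
    (Ω : Set (OnePoint ℂ))
    (hΩ : Ω = connectedComponentIn ((fun z : ℂ => (z : OnePoint ℂ)) '' E)ᶜ OnePoint.infty) :
    kernelAtInfty Ωs = Ω ∧
      ∀ φ : ℕ → ℕ, StrictMono φ → kernelAtInfty (Ωs ∘ φ) = Ω := by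
  refine ⟨kernel_core Ωs hdom E hE hconv Ω hΩ, fun φ hφ => ?_⟩
  exact kernel_core (Ωs ∘ φ) (fun n => hdom (φ n)) E hE
    (hconv.comp hφ.tendsto_atTop) Ω hΩ
end
end

section
/- Let Ω_n ⊂ ℂ be domains with complements E_n = ℂ \ Ω_n converging in the Hausdorff sense to a compact set E ⊂ ℂ. Let A ≥ 1 and let γ_n : [0,1] → closure(Ω_n) be A-uniform curves parametrized by rescaled arclength such that γ_n(0) → z₀ and γ_n(1) → z₁ with z₀ ≠ z₁. Then there exist a component Ω of ℂ \ E and a subsequence of (γ_n) converging uniformly to an A-uniform curve γ : [0,1] → closure(Ω). -/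
open Set Metric Filter Topology
open scoped ENNReal NNReal BoundedContinuousFunction
set_option synthInstance.maxHeartbeats 1000000
set_option maxHeartbeats 1000000

noncomputable section


lemma extract_unif {K : ℝ≥0} {B : ℝ} {f : ℕ → ℝ → ℂ}
    (hcont : ∀ n, ContinuousOn (f n) (Set.Icc 0 1))
    (hlip : ∀ n, LipschitzOnWith K (f n) (Set.Icc 0 1))
    (hbdd : ∀ n, ∀ t ∈ Set.Icc (0:ℝ) 1, ‖f n t‖ ≤ B) :
    ∃ φ : ℕ → ℕ, StrictMono φ ∧ ∃ γ : ℝ → ℂ,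
      TendstoUniformlyOn (fun n => f (φ n)) γ atTop (Set.Icc 0 1) := by
  haveI : CompactSpace (Set.Icc (0:ℝ) 1) := isCompact_iff_compactSpace.mp isCompact_Icc
  set F : ℕ → (Set.Icc (0:ℝ) 1 →ᵇ ℂ) :=
    fun n => BoundedContinuousFunction.mkOfCompact ⟨(Set.Icc 0 1).restrict (f n), (hcont n).restrict⟩
    with hF
  have hFapp : ∀ n (x : Set.Icc (0:ℝ) 1), F n x = f n x := fun n x => rfl
  have in_s : ∀ (g : Set.Icc (0:ℝ) 1 →ᵇ ℂ) (x : Set.Icc (0:ℝ) 1),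
      g ∈ Set.range F → g x ∈ closedBall 0 B := by
    rintro g x ⟨n, rfl⟩
    simpa [hFapp, Complex.dist_eq] using hbdd n x x.2
  have equi : Equicontinuous ((↑) : Set.range F → Set.Icc (0:ℝ) 1 → ℂ) := by
    apply Metric.equicontinuous_of_continuity_modulus (fun d => K * d)
    · simpa using (continuous_mul_left (K:ℝ)).tendsto' 0 0 (by simp)
    · rintro x y ⟨g, n, rfl⟩
      have := (hlip n).dist_le_mul x x.2 y y.2
      simpa [hFapp, Subtype.dist_eq] using this
  have hcl : IsCompact (closure (Set.range F)) :=
    BoundedContinuousFunction.arzela_ascoli (closedBall 0 B) (isCompact_closedBall _ _)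
      (Set.range F) in_s equi
  obtain ⟨g, -, φ, hφ, hgconv⟩ :=
    hcl.tendsto_subseq (x := F) (fun n => subset_closure (Set.mem_range_self n))
  refine ⟨φ, hφ, fun t => g (Set.projIcc 0 1 zero_le_one t), ?_⟩
  rw [Metric.tendstoUniformlyOn_iff]
  intro ε hε
  have : ∀ᶠ n in atTop, dist (F (φ n)) g < ε :=
    (Metric.tendsto_nhds.mp hgconv) ε hε
  filter_upwards [this] with n hn x hx
  have h1 : g (Set.projIcc 0 1 zero_le_one x) = g ⟨x, hx⟩ := by
    rw [Set.projIcc_of_mem]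
  rw [h1]
  calc dist (g ⟨x, hx⟩) (f (φ n) x) = dist (F (φ n) ⟨x, hx⟩) (g ⟨x, hx⟩) := by
        rw [dist_comm, hFapp]
    _ ≤ dist (F (φ n)) g := BoundedContinuousFunction.dist_coe_le_dist _
    _ < ε := hn


/-- An `A`-uniform curve with values in the closure of `Ω` (endpoints may lie on `∂Ω`). -/
def IsUniformCurveIn (A : ℝ) (Ω : Set ℂ) (γ : ℝ → ℂ) : Prop :=
  ContinuousOn γ (Set.Icc 0 1) ∧ Set.MapsTo γ (Set.Icc 0 1) (closure Ω) ∧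
  eVariationOn γ (Set.Icc 0 1) ≤ ENNReal.ofReal (A * dist (γ 0) (γ 1)) ∧
  ∀ t ∈ Set.Icc (0:ℝ) 1,
    min (eVariationOn γ (Set.Icc 0 t)) (eVariationOn γ (Set.Icc t 1))
      ≤ ENNReal.ofReal (A * Metric.infDist (γ t) (frontier Ω))

/-- `γ` is parametrized by rescaled arclength (constant speed) on `[0,1]`. -/
def ConstSpeedOn (γ : ℝ → ℂ) : Prop :=
  ∀ s t : ℝ, 0 ≤ s → s ≤ t → t ≤ 1 →
    eVariationOn γ (Set.Icc s t) = ENNReal.ofReal (t - s) * eVariationOn γ (Set.Icc 0 1)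

/-- Limits of uniform curves: if the complements of domains `Ω_n` converge in
the Hausdorff sense to `E` and `γ_n` are `A`-uniform curves in `closure(Ω_n)` parametrized by
rescaled arclength, with endpoints converging to distinct points, then some subsequence
converges uniformly to an `A`-uniform curve with values in the closure of a component of
`ℂ \ E`. -/
theorem statement_8 (A : ℝ) (hA : 1 ≤ A) (Ωs : ℕ → Set ℂ)
    (hdom : ∀ n, IsOpen (Ωs n) ∧ IsConnected (Ωs n))
    (E : Set ℂ) (hE : IsCompact E)
    (hconv : Tendsto (fun n => EMetric.hausdorffEdist (Ωs n)ᶜ E) atTop (nhds 0))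
    (γs : ℕ → ℝ → ℂ) (hγ : ∀ n, IsUniformCurveIn A (Ωs n) (γs n))
    (hspeed : ∀ n, ConstSpeedOn (γs n))
    (z₀ z₁ : ℂ) (h0 : Tendsto (fun n => γs n 0) atTop (nhds z₀))
    (h1 : Tendsto (fun n => γs n 1) atTop (nhds z₁)) (hne : z₀ ≠ z₁) :
    ∃ Ω' : Set ℂ, (∃ z ∈ Eᶜ, Ω' = connectedComponentIn Eᶜ z) ∧
      ∃ φ : ℕ → ℕ, StrictMono φ ∧ ∃ γ : ℝ → ℂ,
        TendstoUniformlyOn (fun n => γs (φ n)) γ atTop (Set.Icc 0 1) ∧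
        IsUniformCurveIn A Ω' γ ∧ γ 0 = z₀ ∧ γ 1 = z₁ := by

  classical
  have hA0 : (0:ℝ) < A := lt_of_lt_of_le one_pos hA
  have h01 : (0:ℝ) ∈ Icc (0:ℝ) 1 := ⟨le_rfl, zero_le_one⟩
  have h11 : (1:ℝ) ∈ Icc (0:ℝ) 1 := ⟨zero_le_one, le_rfl⟩
  set L : ℕ → ℝ≥0∞ := fun n => eVariationOn (γs n) (Icc 0 1) with hLdef
  have hdistt : Tendsto (fun n => dist (γs n 0) (γs n 1)) atTop (𝓝 (dist z₀ z₁)) := h0.dist h1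
  obtain ⟨C, hC⟩ := hdistt.bddAbove_range
  have hC' : ∀ n, dist (γs n 0) (γs n 1) ≤ C := fun n => hC (Set.mem_range_self n)
  have hC0 : (0:ℝ) ≤ C := le_trans dist_nonneg (hC' 0)
  have hAC0 : (0:ℝ) ≤ A * C := mul_nonneg hA0.le hC0
  have hL : ∀ n, L n ≤ ENNReal.ofReal (A * C) := fun n =>
    ((hγ n).2.2.1).trans (ENNReal.ofReal_le_ofReal (by nlinarith [hC' n, dist_nonneg (x := γs n 0) (y := γs n 1)]))
  -- Lipschitz bounds
  have hed : ∀ n, ∀ x ∈ Icc (0:ℝ) 1, ∀ y ∈ Icc (0:ℝ) 1, x ≤ y →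
      edist (γs n x) (γs n y) ≤ ENNReal.ofReal (A * C) * edist x y := by
    intro n x hx y hy hxy
    have h1 : edist (γs n x) (γs n y) ≤ eVariationOn (γs n) (Icc x y) :=
      eVariationOn.edist_le _ (left_mem_Icc.mpr hxy) (right_mem_Icc.mpr hxy)
    rw [hspeed n x y hx.1 hxy hy.2] at h1
    refine h1.trans ?_
    calc ENNReal.ofReal (y - x) * L n
        ≤ ENNReal.ofReal (y - x) * ENNReal.ofReal (A * C) := mul_le_mul_right (hL n) _
      _ = ENNReal.ofReal (A * C) * ENNReal.ofReal (y - x) := mul_comm _ _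
      _ = ENNReal.ofReal (A * C) * edist x y := by
          rw [edist_dist, Real.dist_eq, abs_of_nonpos (by linarith), neg_sub]
  have hcoe : ((A * C).toNNReal : ℝ≥0∞) = ENNReal.ofReal (A * C) := rfl
  have hlip : ∀ n, LipschitzOnWith (A * C).toNNReal (γs n) (Icc 0 1) := by
    intro n x hx y hy
    rw [hcoe]
    rcases le_total x y with h | h
    · exact hed n x hx y hy h
    · rw [edist_comm (γs n x), edist_comm x]
      exact hed n y hy x hx h
  -- uniform bound
  obtain ⟨B₀, hB₀⟩ := h0.norm.bddAbove_range
  have hbdd : ∀ n, ∀ t ∈ Icc (0:ℝ) 1, ‖γs n t‖ ≤ B₀ + A * C := by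
    intro n t ht
    have h1 : dist (γs n t) (γs n 0) ≤ (A * C).toNNReal * dist t 0 :=
      (hlip n).dist_le_mul t ht 0 h01
    have h2 : ((A * C).toNNReal : ℝ) = A * C := Real.coe_toNNReal _ hAC0
    have h3 : dist t 0 ≤ 1 := by
      rw [Real.dist_eq, sub_zero, abs_of_nonneg ht.1]; exact ht.2
    have h4 : ‖γs n 0‖ ≤ B₀ := hB₀ (Set.mem_range_self n)
    have h5 : ‖γs n t‖ ≤ ‖γs n 0‖ + dist (γs n t) (γs n 0) := by
      rw [dist_eq_norm]
      calc ‖γs n t‖ = ‖γs n 0 + (γs n t - γs n 0)‖ := by ring_nf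
        _ ≤ ‖γs n 0‖ + ‖γs n t - γs n 0‖ := norm_add_le _ _
    have h6 : (A * C).toNNReal * dist t 0 ≤ A * C := by
      rw [h2] at h1 ⊢
      nlinarith [dist_nonneg (x := t) (y := (0:ℝ))]
    linarith
  -- extract subsequence
  obtain ⟨φ, hφ, γ, huc⟩ := extract_unif (fun n => (hγ n).1) hlip hbdd
  have hptw : ∀ x ∈ Icc (0:ℝ) 1, Tendsto (fun n => γs (φ n) x) atTop (𝓝 (γ x)) :=
    fun x hx => huc.tendsto_at hx
  have hγ0 : γ 0 = z₀ := tendsto_nhds_unique (hptw 0 h01) (h0.comp hφ.tendsto_atTop)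
  have hγ1 : γ 1 = z₁ := tendsto_nhds_unique (hptw 1 h11) (h1.comp hφ.tendsto_atTop)
  -- continuity of the limit
  have hlipγ : LipschitzOnWith (A * C).toNNReal γ (Icc 0 1) := by
    intro x hx y hy
    have htd : Tendsto (fun n => edist (γs (φ n) x) (γs (φ n) y)) atTop
        (𝓝 (edist (γ x) (γ y))) := (hptw x hx).edist (hptw y hy)
    exact le_of_tendsto htd (Eventually.of_forall fun n => hlip (φ n) hx hy)
  have hcontγ : ContinuousOn γ (Icc 0 1) := hlipγ.continuousOn
  -- lower semicontinuity of variation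
  have hlsc : ∀ s : Set ℝ, s ⊆ Icc 0 1 →
      eVariationOn γ s ≤ atTop.liminf (fun n => eVariationOn (γs (φ n)) s) := by
    intro s hs
    by_contra h
    push_neg at h
    obtain ⟨v, hv1, hv2⟩ := exists_between h
    have haux := eVariationOn.lowerSemicontinuous_aux
      (F := fun n => γs (φ n)) (p := atTop) (f := γ) (s := s)
      (fun x hx => hptw x (hs hx)) hv2
    have h2 : v ≤ atTop.liminf (fun n => eVariationOn (γs (φ n)) s) :=
      le_liminf_of_le (by isBoundedDefault) (haux.mono fun n hn => hn.le)
    exact absurd h2 (not_le.mpr hv1)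
  set m := dist z₀ z₁ with hmdef
  have hm : 0 < m := dist_pos.mpr hne
  have hLlow : ∀ᶠ n in atTop, ENNReal.ofReal (m / 2) ≤ L n := by
    have h2 : ∀ᶠ n in atTop, m / 2 < dist (γs n 0) (γs n 1) :=
      hdistt.eventually (eventually_gt_nhds (by linarith))
    filter_upwards [h2] with n hn
    have h3 : ENNReal.ofReal (dist (γs n 0) (γs n 1)) ≤ L n := by
      rw [← edist_dist]; exact eVariationOn.edist_le _ h01 h11
    exact (ENNReal.ofReal_le_ofReal hn.le).trans h3
  -- E is nonempty
  have hEne : E.Nonempty := by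
    have hhd : ∀ᶠ n in atTop, EMetric.hausdorffEdist (Ωs n)ᶜ E ≠ ⊤ := by
      filter_upwards [hconv (Iio_mem_nhds (show (0:ℝ≥0∞) < 1 by norm_num))] with n hn
      exact hn.ne_top 
    obtain ⟨n, hn1, hn2⟩ := (hLlow.and hhd).exists
    by_contra hEe
    rw [Set.not_nonempty_iff_eq_empty] at hEe
    subst hEe
    have hcne : (Ωs n)ᶜ = ∅ := by
      by_contra hne'
      exact hn2 (EMetric.hausdorffEdist_empty (Set.nonempty_iff_ne_empty.mpr hne'))
    have hfr : frontier (Ωs n) = ∅ := by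
      rw [frontier_eq_closure_inter_closure, hcne, closure_empty, Set.inter_empty]
    have hcig := (hγ n).2.2.2 (1/2) (by norm_num)
    rw [hfr] at hcig
    simp only [Metric.infDist_empty, mul_zero, ENNReal.ofReal_zero, le_zero_iff] at hcig
    have hv1 : eVariationOn (γs n) (Icc 0 (1/2)) = ENNReal.ofReal (1/2) * L n := by
      have := hspeed n 0 (1/2) le_rfl (by norm_num) (by norm_num)
      simpa using this
    have hv2 : eVariationOn (γs n) (Icc (1/2) 1) = ENNReal.ofReal (1/2) * L n := by
      have := hspeed n (1/2) 1 (by norm_num) (by norm_num) le_rfl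
      norm_num at this ⊢
      exact this
    rw [hv1, hv2, min_self, mul_eq_zero] at hcig
    rcases hcig with hcig | hcig
    · rw [ENNReal.ofReal_eq_zero] at hcig; norm_num at hcig
    · rw [hcig, le_zero_iff, ENNReal.ofReal_eq_zero] at hn1; linarith
  -- per-n key inequality
  have key : ∀ n, ∀ t ∈ Icc (0:ℝ) 1,
      min (eVariationOn (γs n) (Icc 0 t)) (eVariationOn (γs n) (Icc t 1))
        ≤ ENNReal.ofReal A *
          (EMetric.infEdist (γs n t) E + EMetric.hausdorffEdist (Ωs n)ᶜ E) := by
    intro n t ht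
    set d := Metric.infDist (γs n t) (frontier (Ωs n)) with hd
    have hcig := (hγ n).2.2.2 t ht
    rcases le_or_gt d 0 with hd0 | hd0
    · have hAd : A * d ≤ 0 := mul_nonpos_of_nonneg_of_nonpos hA0.le hd0
      refine hcig.trans ?_
      rw [ENNReal.ofReal_eq_zero.mpr hAd]
      exact zero_le
    · have hxcl : γs n t ∈ closure (Ωs n) := (hγ n).2.1 ht
      have hballfr : ∀ y ∈ ball (γs n t) d, y ∉ frontier (Ωs n) := by
        intro y hy hyf
        have h1 : d ≤ dist (γs n t) y := Metric.infDist_le_dist_of_mem hyf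
        rw [mem_ball, dist_comm] at hy
        exact absurd h1 (not_le.mpr hy)
      have hxΩ : γs n t ∈ Ωs n := by
        rw [closure_eq_interior_union_frontier] at hxcl
        rcases hxcl with h | h
        · rwa [(hdom n).1.interior_eq] at h
        · exact absurd h (hballfr _ (mem_ball_self hd0))
      have hball : ball (γs n t) d ⊆ Ωs n := by
        have hker : ball (γs n t) d ⊆ interior (Ωs n) ∪ (closure (Ωs n))ᶜ := by
          intro y hy
          by_cases hyc : y ∈ closure (Ωs n)
          · rw [closure_eq_interior_union_frontier] at hyc
            rcases hyc with h | h
            · exact Or.inl h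
            · exact absurd h (hballfr _ hy)
          · exact Or.inr hyc
        have hsub := (convex_ball (γs n t) d).isPreconnected.subset_left_of_subset_union
          isOpen_interior isClosed_closure.isOpen_compl
          (disjoint_compl_right.mono_left interior_subset_closure) hker
          ⟨γs n t, mem_ball_self hd0, by rw [(hdom n).1.interior_eq]; exact hxΩ⟩
        rwa [(hdom n).1.interior_eq] at hsub
      have hinf : ENNReal.ofReal d ≤ EMetric.infEdist (γs n t) (Ωs n)ᶜ := by
        refine EMetric.le_infEdist.2 ?_
        intro y hy
        have h1 : d ≤ dist (γs n t) y := by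
          by_contra hlt
          push_neg at hlt
          exact hy (hball (by rwa [mem_ball, dist_comm]))
        rw [edist_dist]
        exact ENNReal.ofReal_le_ofReal h1
      have htrans : ENNReal.ofReal d ≤
          EMetric.infEdist (γs n t) E + EMetric.hausdorffEdist (Ωs n)ᶜ E := by
        refine hinf.trans ?_
        calc EMetric.infEdist (γs n t) (Ωs n)ᶜ
            ≤ EMetric.infEdist (γs n t) E + EMetric.hausdorffEdist E (Ωs n)ᶜ :=
              EMetric.infEdist_le_infEdist_add_hausdorffEdist
          _ = EMetric.infEdist (γs n t) E + EMetric.hausdorffEdist (Ωs n)ᶜ E := by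
              rw [show EMetric.hausdorffEdist E (Ωs n)ᶜ = EMetric.hausdorffEdist (Ωs n)ᶜ E from EMetric.hausdorffEdist_comm]
      refine hcig.trans ?_
      rw [ENNReal.ofReal_mul hA0.le]
      exact mul_le_mul_right htrans _
  -- liminf bound
  have keyLim : ∀ t ∈ Icc (0:ℝ) 1,
      atTop.liminf (fun n => min (eVariationOn (γs (φ n)) (Icc 0 t))
          (eVariationOn (γs (φ n)) (Icc t 1)))
        ≤ ENNReal.ofReal A * EMetric.infEdist (γ t) E := by
    intro t ht
    have h1 : atTop.liminf (fun n => min (eVariationOn (γs (φ n)) (Icc 0 t))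
          (eVariationOn (γs (φ n)) (Icc t 1)))
        ≤ atTop.liminf (fun n => ENNReal.ofReal A *
          (EMetric.infEdist (γs (φ n) t) E + EMetric.hausdorffEdist (Ωs (φ n))ᶜ E)) :=
      liminf_le_liminf (Eventually.of_forall fun n => key (φ n) t ht)
    have h2 : Tendsto (fun n => EMetric.infEdist (γs (φ n) t) E +
        EMetric.hausdorffEdist (Ωs (φ n))ᶜ E) atTop (𝓝 (EMetric.infEdist (γ t) E + 0)) := by
      refine Tendsto.add ?_ (hconv.comp hφ.tendsto_atTop)
      exact (EMetric.continuous_infEdist.tendsto _).comp (hptw t ht)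
    have h3 := (ENNReal.Tendsto.const_mul (a := ENNReal.ofReal A) h2 (Or.inr ENNReal.ofReal_ne_top)).liminf_eq
    rw [add_zero] at h3
    exact h1.trans_eq h3
  -- transfer to the limit curve
  have keyGamma : ∀ t ∈ Icc (0:ℝ) 1,
      min (eVariationOn γ (Icc 0 t)) (eVariationOn γ (Icc t 1))
        ≤ ENNReal.ofReal A * EMetric.infEdist (γ t) E := by
    intro t ht
    rcases le_total t (1 - t) with hc | hc
    · have hmin : ∀ n, min (eVariationOn (γs n) (Icc 0 t)) (eVariationOn (γs n) (Icc t 1))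
          = eVariationOn (γs n) (Icc 0 t) := by
        intro n
        have e1 : eVariationOn (γs n) (Icc 0 t) = ENNReal.ofReal t * L n := by
          simpa using hspeed n 0 t le_rfl ht.1 ht.2
        have e2 : eVariationOn (γs n) (Icc t 1) = ENNReal.ofReal (1 - t) * L n :=
          hspeed n t 1 ht.1 ht.2 le_rfl
        rw [e1, e2]
        exact min_eq_left (mul_le_mul_left (ENNReal.ofReal_le_ofReal hc) _)
      calc min (eVariationOn γ (Icc 0 t)) (eVariationOn γ (Icc t 1))
          ≤ eVariationOn γ (Icc 0 t) := min_le_left _ _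
        _ ≤ atTop.liminf (fun n => eVariationOn (γs (φ n)) (Icc 0 t)) :=
            hlsc _ (Icc_subset_Icc le_rfl ht.2)
        _ = atTop.liminf (fun n => min (eVariationOn (γs (φ n)) (Icc 0 t))
              (eVariationOn (γs (φ n)) (Icc t 1))) := by simp_rw [hmin]
        _ ≤ _ := keyLim t ht
    · have hmin : ∀ n, min (eVariationOn (γs n) (Icc 0 t)) (eVariationOn (γs n) (Icc t 1))
          = eVariationOn (γs n) (Icc t 1) := by
        intro n
        have e1 : eVariationOn (γs n) (Icc 0 t) = ENNReal.ofReal t * L n := by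
          simpa using hspeed n 0 t le_rfl ht.1 ht.2
        have e2 : eVariationOn (γs n) (Icc t 1) = ENNReal.ofReal (1 - t) * L n :=
          hspeed n t 1 ht.1 ht.2 le_rfl
        rw [e1, e2]
        exact min_eq_right (mul_le_mul_left (ENNReal.ofReal_le_ofReal hc) _)
      calc min (eVariationOn γ (Icc 0 t)) (eVariationOn γ (Icc t 1))
          ≤ eVariationOn γ (Icc t 1) := min_le_right _ _
        _ ≤ atTop.liminf (fun n => eVariationOn (γs (φ n)) (Icc t 1)) :=
            hlsc _ (Icc_subset_Icc ht.1 le_rfl)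
        _ = atTop.liminf (fun n => min (eVariationOn (γs (φ n)) (Icc 0 t))
              (eVariationOn (γs (φ n)) (Icc t 1))) := by simp_rw [hmin]
        _ ≤ _ := keyLim t ht
  -- interior points avoid E
  have hmem : ∀ t ∈ Ioo (0:ℝ) 1, γ t ∉ E := by
    intro t ht htE
    have hc : 0 < min t (1 - t) * (m / 2) := by
      have := ht.1
      have := ht.2
      have h1 : 0 < min t (1 - t) := lt_min ht.1 (by linarith [ht.2])
      positivity
    have hlow : ∀ᶠ n in atTop, ENNReal.ofReal (min t (1 - t) * (m / 2)) ≤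
        min (eVariationOn (γs (φ n)) (Icc 0 t)) (eVariationOn (γs (φ n)) (Icc t 1)) := by
      filter_upwards [hφ.tendsto_atTop.eventually hLlow] with n hn
      have e1 : eVariationOn (γs (φ n)) (Icc 0 t) = ENNReal.ofReal t * L (φ n) := by
        simpa using hspeed (φ n) 0 t le_rfl ht.1.le ht.2.le
      have e2 : eVariationOn (γs (φ n)) (Icc t 1) = ENNReal.ofReal (1 - t) * L (φ n) :=
        hspeed (φ n) t 1 ht.1.le ht.2.le le_rfl
      rw [e1, e2, ENNReal.ofReal_mul (le_min ht.1.le (by linarith [ht.2]))]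
      refine le_min ?_ ?_
      · exact mul_le_mul' (ENNReal.ofReal_le_ofReal (min_le_left _ _)) hn
      · exact mul_le_mul' (ENNReal.ofReal_le_ofReal (min_le_right _ _)) hn
    have h1 : ENNReal.ofReal (min t (1 - t) * (m / 2)) ≤
        ENNReal.ofReal A * EMetric.infEdist (γ t) E :=
      (le_liminf_of_le (by isBoundedDefault) hlow).trans
        (keyLim t (Ioo_subset_Icc_self ht))
    rw [show EMetric.infEdist (γ t) E = 0 from EMetric.infEdist_zero_of_mem htE, mul_zero, le_zero_iff,
      ENNReal.ofReal_eq_zero] at h1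
    linarith
  -- the component
  have h12 : (1/2 : ℝ) ∈ Ioo (0:ℝ) 1 := by norm_num
  have hz : γ (1/2) ∈ Eᶜ := hmem _ h12
  set Ω' : Set ℂ := connectedComponentIn Eᶜ (γ (1/2)) with hΩ'
  have hEopen : IsOpen Eᶜ := hE.isClosed.isOpen_compl
  have hopenΩ' : IsOpen Ω' := hEopen.connectedComponentIn
  have hsubΩ' : γ '' Ioo 0 1 ⊆ Ω' := by
    have hpre : IsPreconnected (γ '' Ioo 0 1) :=
      isPreconnected_Ioo.image γ (hcontγ.mono Ioo_subset_Icc_self)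
    have hsube : γ '' Ioo 0 1 ⊆ Eᶜ := by
      rintro _ ⟨s, hs, rfl⟩; exact hmem s hs
    exact hpre.subset_connectedComponentIn ⟨1/2, h12, rfl⟩ hsube
  have hclend : ∀ t ∈ Icc (0:ℝ) 1, t = 0 ∨ t = 1 → γ t ∈ closure Ω' := by
    rintro t ht h
    have hnb : t ∈ closure (Ioo (0:ℝ) 1) := by
      rw [closure_Ioo (by norm_num : (0:ℝ) ≠ 1)]
      exact ht
    have hne' : (𝓝[Ioo (0:ℝ) 1] t).NeBot := mem_closure_iff_nhdsWithin_neBot.mp hnb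
    have htend : Tendsto γ (𝓝[Ioo (0:ℝ) 1] t) (𝓝 (γ t)) :=
      (hcontγ t ht).mono_left (nhdsWithin_mono _ Ioo_subset_Icc_self)
    have hmem2 : γ t ∈ closure (γ '' Ioo 0 1) :=
      mem_closure_of_tendsto htend
        (eventually_mem_nhdsWithin.mono fun s hs => Set.mem_image_of_mem γ hs)
    exact closure_mono hsubΩ' hmem2
  have hmapsγ : MapsTo γ (Icc 0 1) (closure Ω') := by
    intro t ht
    rcases eq_or_lt_of_le ht.1 with h0t | h0t
    · exact hclend t ht (Or.inl h0t.symm)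
    rcases eq_or_lt_of_le ht.2 with h1t | h1t
    · exact hclend t ht (Or.inr h1t)
    exact subset_closure (hsubΩ' ⟨t, ⟨h0t, h1t⟩, rfl⟩)
  have hfrsub : frontier Ω' ⊆ E := by
    intro x hx
    by_contra hxE
    have hop : IsOpen (connectedComponentIn Eᶜ x) := hEopen.connectedComponentIn
    have hmemx : x ∈ connectedComponentIn Eᶜ x := mem_connectedComponentIn hxE
    have hx1 : x ∈ closure Ω' := hx.1
    obtain ⟨y, hy1, hy2⟩ := _root_.mem_closure_iff.mp hx1 _ hop hmemx
    have heq : connectedComponentIn Eᶜ x = Ω' := by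
      rw [connectedComponentIn_eq hy1, hΩ', connectedComponentIn_eq hy2]
    have : x ∈ Ω' := heq ▸ hmemx
    rw [hopenΩ'.frontier_eq] at hx
    exact hx.2 this
  have hfrne : (frontier Ω').Nonempty := by
    rw [nonempty_frontier_iff]
    refine ⟨⟨γ (1/2), mem_connectedComponentIn hz⟩, ?_⟩
    intro huniv
    obtain ⟨e, he⟩ := hEne
    have he' : e ∈ Ω' := by rw [huniv]; exact Set.mem_univ e
    exact (connectedComponentIn_subset Eᶜ (γ (1/2)) he') he
  refine ⟨Ω', ⟨γ (1/2), hz, rfl⟩, φ, hφ, γ, huc, ⟨hcontγ, hmapsγ, ?_, ?_⟩, hγ0, hγ1⟩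
  · -- total variation bound
    calc eVariationOn γ (Icc 0 1)
        ≤ atTop.liminf (fun n => eVariationOn (γs (φ n)) (Icc 0 1)) := hlsc _ subset_rfl
      _ ≤ atTop.liminf (fun n => ENNReal.ofReal (A * dist (γs (φ n) 0) (γs (φ n) 1))) :=
          liminf_le_liminf (Eventually.of_forall fun n => (hγ (φ n)).2.2.1)
      _ = ENNReal.ofReal (A * dist (γ 0) (γ 1)) := by
          refine Tendsto.liminf_eq ?_
          rw [hγ0, hγ1]
          exact (ENNReal.continuous_ofReal.tendsto _).comp
            ((hdistt.comp hφ.tendsto_atTop).const_mul A)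
  · -- cigar condition
    intro t ht
    refine (keyGamma t ht).trans ?_
    have h2 : EMetric.infEdist (γ t) E ≤
        ENNReal.ofReal (Metric.infDist (γ t) (frontier Ω')) := by
      refine (EMetric.infEdist_anti hfrsub).trans ?_
      exact (ENNReal.ofReal_toReal (Metric.infEdist_ne_top hfrne)).symm.le
    calc ENNReal.ofReal A * EMetric.infEdist (γ t) E
        ≤ ENNReal.ofReal A * ENNReal.ofReal (Metric.infDist (γ t) (frontier Ω')) :=
          mul_le_mul_right h2 _
      _ = ENNReal.ofReal (A * Metric.infDist (γ t) (frontier Ω')) :=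
          (ENNReal.ofReal_mul hA0.le).symm
end
end
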